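/- arXiv:1506.03303 — 5 statements merged into one kernel-verified Lean document; each statement's English description precedes it below -/
import Mathlib

section
/- Let G be a finite group, F a field with char(F) not dividing |G|, and H ⊆ K subgroups of G with H ≠ K. Set e = Ĥ − K̂. Then the minimum Hamming weight of a nonzero element of the left ideal (FG)e equals 2|H|. -/
open scoped Classical

/-- `hat F S` is the element `Ŝ = (1/|S|) ∑_{s ∈ S} s` of the group algebra `F G`. -/
noncomputable def hat (F : Type*) [Field F] {G : Type*} [Group G] [Fintype G]
    (S : Subgroup G) : MonoidAlgebra F G :=
  (Nat.card S : F)⁻¹ • ∑ g : G, if g ∈ S then MonoidAlgebra.of F G g else 0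

/-- The Hamming weight of an element of the group algebra: the number of nonzero
coefficients. -/
noncomputable def wt {F : Type*} [Field F] {G : Type*} [Group G]
    (α : MonoidAlgebra F G) : ℕ :=
  α.coeff.support.card

section lemmas
variable {F : Type*} [Field F] {G : Type*} [Group G] [Fintype G]

lemma hat_apply (S : Subgroup G) (x : G) :
    (hat F S).coeff x = if x ∈ S then (Nat.card S : F)⁻¹ else 0 := by
  rw [hat, MonoidAlgebra.coeff_smul, Finsupp.smul_apply, MonoidAlgebra.coeff_sum, Finset.sum_apply']
  rw [Finset.sum_eq_single x]
  · by_cases h : x ∈ S <;> simp [h, MonoidAlgebra.of_apply]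
  · intro b _ hb
    by_cases h : b ∈ S
    · rw [if_pos h, MonoidAlgebra.of_apply, MonoidAlgebra.coeff_single, Finsupp.single_apply, if_neg hb]
    · simp [h]
  · simp

lemma single_mul_hat {S : Subgroup G} {k : G} (hk : k ∈ S) :
    MonoidAlgebra.single k (1 : F) * hat F S = hat F S := by
  ext x
  rw [MonoidAlgebra.coeff_single_mul_apply, one_mul, hat_apply, hat_apply,
    S.mul_mem_cancel_left (S.inv_mem hk)]

lemma hat_mul_single {S : Subgroup G} {k : G} (hk : k ∈ S) :
    hat F S * MonoidAlgebra.single k (1 : F) = hat F S := by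
  ext x
  rw [MonoidAlgebra.coeff_mul_single_apply, mul_one, hat_apply, hat_apply,
    S.mul_mem_cancel_right (S.inv_mem hk)]

lemma card_filter_mem (S : Subgroup G) :
    (Finset.univ.filter (· ∈ S)).card = Nat.card S := by
  rw [Nat.card_eq_fintype_card, Fintype.card_subtype]

lemma sum_ite_subgroup (S : Subgroup G) (c : MonoidAlgebra F G) :
    (∑ g : G, if g ∈ S then c else 0) = (Nat.card S : F) • c := by
  rw [← Finset.sum_filter, Finset.sum_const, card_filter_mem,
    ← Nat.cast_smul_eq_nsmul F]

lemma hat_mul_hat_left {T S : Subgroup G} (hTS : T ≤ S) (hT : (Nat.card T : F) ≠ 0) :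
    hat F T * hat F S = hat F S := by
  nth_rewrite 1 [hat]
  rw [smul_mul_assoc, Finset.sum_mul]
  have h1 : ∀ g : G, (if g ∈ T then MonoidAlgebra.of F G g else 0) * hat F S
      = if g ∈ T then hat F S else 0 := by
    intro g
    by_cases h : g ∈ T
    · rw [if_pos h, if_pos h, MonoidAlgebra.of_apply, single_mul_hat (hTS h)]
    · rw [if_neg h, if_neg h, zero_mul]
  rw [Finset.sum_congr rfl fun g _ => h1 g, sum_ite_subgroup, smul_smul,
    inv_mul_cancel₀ hT, one_smul]

lemma hat_mul_hat_right {T S : Subgroup G} (hTS : T ≤ S) (hT : (Nat.card T : F) ≠ 0) :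
    hat F S * hat F T = hat F S := by
  nth_rewrite 2 [hat]
  rw [mul_smul_comm, Finset.mul_sum]
  have h1 : ∀ g : G, hat F S * (if g ∈ T then MonoidAlgebra.of F G g else 0)
      = if g ∈ T then hat F S else 0 := by
    intro g
    by_cases h : g ∈ T
    · rw [if_pos h, if_pos h, MonoidAlgebra.of_apply, hat_mul_single (hTS h)]
    · rw [if_neg h, if_neg h, mul_zero]
  rw [Finset.sum_congr rfl fun g _ => h1 g, sum_ite_subgroup, smul_smul,
    inv_mul_cancel₀ hT, one_smul]

lemma mul_hat_apply (α : MonoidAlgebra F G) (S : Subgroup G) (x : G) :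
    (α * hat F S).coeff x = (Nat.card S : F)⁻¹ * ∑ g : G, if g ∈ S then α.coeff (x * g) else 0 := by
  rw [hat, mul_smul_comm, MonoidAlgebra.coeff_smul, Finsupp.smul_apply, smul_eq_mul]
  congr 1
  rw [Finset.mul_sum, MonoidAlgebra.coeff_sum, Finset.sum_apply']
  have h1 : ∀ g : G, (α * if g ∈ S then MonoidAlgebra.of F G g else 0).coeff x
      = if g ∈ S then α.coeff (x * g⁻¹) else 0 := by
    intro g
    by_cases h : g ∈ S
    · rw [if_pos h, if_pos h, MonoidAlgebra.of_apply, MonoidAlgebra.coeff_mul_single_apply, mul_one]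
    · rw [if_neg h, if_neg h, mul_zero, MonoidAlgebra.coeff_zero, Finsupp.zero_apply]
  rw [Finset.sum_congr rfl fun g _ => h1 g]
  refine Finset.sum_equiv (Equiv.inv G) (by simp) ?_
  intro g _
  simp only [Equiv.inv_apply, inv_inv]
  rw [inv_mem_iff]

end lemmas

theorem stmt2 {F : Type*} [Field F] {G : Type*} [Group G] [Fintype G]
    (hchar : (Fintype.card G : F) ≠ 0)
    (H K : Subgroup G) (hHK : H ≤ K) (hne : H ≠ K) :
    IsLeast {n : ℕ | ∃ α ∈ Ideal.span {hat F H - hat F K}, α ≠ 0 ∧ wt α = n}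
      (2 * Nat.card H) := by
  have hcard : ∀ S : Subgroup G, (Nat.card S : F) ≠ 0 := by
    intro S hS0
    apply hchar
    obtain ⟨c, hc⟩ := Subgroup.card_subgroup_dvd_card S
    rw [← Nat.card_eq_fintype_card, hc, Nat.cast_mul, hS0, zero_mul]
  set e : MonoidAlgebra F G := hat F H - hat F K with he
  have hmHH : hat F H * hat F H = hat F H := hat_mul_hat_left le_rfl (hcard H)
  have hmHK : hat F H * hat F K = hat F K := hat_mul_hat_left hHK (hcard H)
  have hmKH : hat F K * hat F H = hat F K := hat_mul_hat_right hHK (hcard H)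
  have hmKK : hat F K * hat F K = hat F K := hat_mul_hat_left le_rfl (hcard K)
  have heH : e * hat F H = e := by rw [he, sub_mul, hmHH, hmKH]
  have heK : e * hat F K = 0 := by rw [he, sub_mul, hmHK, hmKK, sub_self]
  obtain ⟨k, hkK, hkH⟩ := SetLike.exists_of_lt (lt_of_le_of_ne hHK hne)
  constructor
  · -- membership : the element hat F H - k · hat F H has weight 2|H|
    set α : MonoidAlgebra F G :=
      hat F H - MonoidAlgebra.single k 1 * hat F H with hα
    have hαe : (1 - MonoidAlgebra.single k 1) * e = α := by
      rw [he, hα, sub_mul, one_mul, mul_sub, single_mul_hat hkK]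
      abel
    have hcoef : ∀ x : G, α.coeff x = (if x ∈ H then (Nat.card H : F)⁻¹ else 0)
        - (if k⁻¹ * x ∈ H then (Nat.card H : F)⁻¹ else 0) := by
      intro x
      rw [hα, MonoidAlgebra.coeff_sub, Finsupp.sub_apply, MonoidAlgebra.coeff_single_mul_apply, one_mul,
        hat_apply, hat_apply]
    have hdisjcond : ∀ x : G, x ∈ H → k⁻¹ * x ∈ H → False := by
      intro x hx hkx
      exact hkH (by simpa using H.mul_mem hx (H.inv_mem hkx))
    refine ⟨α, ?_, ?_, ?_⟩
    · rw [← hαe]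
      exact Ideal.mul_mem_left _ _ (Ideal.subset_span rfl)
    · intro h0
      have h1 : α.coeff 1 = 0 := by rw [h0]; rfl
      rw [hcoef 1, if_pos H.one_mem,
        if_neg (fun hh => hdisjcond 1 H.one_mem hh)] at h1
      simp only [sub_zero] at h1
      exact inv_ne_zero (hcard H) h1
    · -- weight computation
      have hsupp : α.coeff.support = Finset.univ.filter (· ∈ H)
          ∪ Finset.univ.filter (fun x => k⁻¹ * x ∈ H) := by
        ext z
        simp only [Finsupp.mem_support_iff, Finset.mem_union, Finset.mem_filter,
          Finset.mem_univ, true_and]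
        rw [hcoef z]
        constructor
        · intro hz
          by_contra hc
          push_neg at hc
          rw [if_neg hc.1, if_neg hc.2, sub_zero] at hz
          exact hz rfl
        · rintro (hz | hz)
          · rw [if_pos hz, if_neg (fun hh => hdisjcond z hz hh), sub_zero]
            exact inv_ne_zero (hcard H)
          · rw [if_neg (fun hh => hdisjcond z hh hz), if_pos hz, zero_sub, neg_ne_zero]
            exact inv_ne_zero (hcard H)
      have himg : Finset.univ.filter (fun x => k⁻¹ * x ∈ H)
          = (Finset.univ.filter (· ∈ H)).image (k * ·) := by
        ext z
        simp only [Finset.mem_filter, Finset.mem_univ, true_and, Finset.mem_image]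
        constructor
        · intro hz
          exact ⟨k⁻¹ * z, hz, by group⟩
        · rintro ⟨h, hh, rfl⟩
          simpa using hh
      have hdisj : Disjoint (Finset.univ.filter (· ∈ H))
          (Finset.univ.filter (fun x => k⁻¹ * x ∈ H)) := by
        rw [Finset.disjoint_left]
        intro z hz1 hz2
        simp only [Finset.mem_filter, Finset.mem_univ, true_and] at hz1 hz2
        exact hdisjcond z hz1 hz2
      rw [wt, hsupp, Finset.card_union_of_disjoint hdisj, himg,
        Finset.card_image_of_injective _ (mul_right_injective k), card_filter_mem]
      ring
  · -- lower bound
    rintro n ⟨α, hαmem, hα0, rfl⟩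
    obtain ⟨β, hβ⟩ := Submodule.mem_span_singleton.mp hαmem
    rw [smul_eq_mul] at hβ
    have hαH : α * hat F H = α := by rw [← hβ, mul_assoc, heH]
    have hαK : α * hat F K = 0 := by rw [← hβ, mul_assoc, heK, mul_zero]
    have hinv : ∀ h ∈ H, ∀ x : G, α.coeff (x * h) = α.coeff x := by
      intro h hh x
      have h1 : α * MonoidAlgebra.single h 1 = α := by
        conv_lhs => rw [← hαH]
        rw [mul_assoc, hat_mul_single hh, hαH]
      have h2 := congrArg (fun f : MonoidAlgebra F G => f.coeff (x * h)) h1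
      simpa [MonoidAlgebra.coeff_mul_single_apply] using h2.symm
    obtain ⟨x₀, hx₀⟩ := Finsupp.support_nonempty_iff.mpr (MonoidAlgebra.coeff_eq_zero.not.mpr hα0)
    have hx₀ne : α.coeff x₀ ≠ 0 := Finsupp.mem_support_iff.mp hx₀
    have hy : ∃ y ∈ α.coeff.support, x₀⁻¹ * y ∉ H := by
      by_contra hcon
      push_neg at hcon
      have h0 : (α * hat F K).coeff x₀ = 0 := by rw [hαK]; rfl
      rw [mul_hat_apply] at h0
      have hsum : (∑ g : G, if g ∈ K then α.coeff (x₀ * g) else 0)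
          = (Nat.card H : F) * α.coeff x₀ := by
        have h1 : ∀ g : G, (if g ∈ K then α.coeff (x₀ * g) else 0)
            = if g ∈ H then α.coeff x₀ else 0 := by
          intro g
          by_cases hg : g ∈ H
          · rw [if_pos (hHK hg), if_pos hg, hinv g hg x₀]
          · rw [if_neg hg]
            by_cases hgK : g ∈ K
            · rw [if_pos hgK]
              by_contra hne0
              have hmem : x₀ * g ∈ α.coeff.support := Finsupp.mem_support_iff.mpr hne0
              exact hg (by simpa using hcon (x₀ * g) hmem)
            · rw [if_neg hgK]
        rw [Finset.sum_congr rfl fun g _ => h1 g, ← Finset.sum_filter,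
          Finset.sum_const, card_filter_mem, nsmul_eq_mul]
      rw [hsum] at h0
      exact (mul_ne_zero (inv_ne_zero (hcard K)) (mul_ne_zero (hcard H) hx₀ne)) h0
    obtain ⟨y, hys, hyH⟩ := hy
    have hsub : ∀ z : G, z ∈ α.coeff.support →
        (Finset.univ.filter (· ∈ H)).image (z * ·) ⊆ α.coeff.support := by
      intro z hz w hw
      simp only [Finset.mem_image, Finset.mem_filter, Finset.mem_univ, true_and] at hw
      obtain ⟨h, hh, rfl⟩ := hw
      rw [Finsupp.mem_support_iff, hinv h hh z]
      exact Finsupp.mem_support_iff.mp hz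
    have hdisj : Disjoint ((Finset.univ.filter (· ∈ H)).image (x₀ * ·))
        ((Finset.univ.filter (· ∈ H)).image (y * ·)) := by
      rw [Finset.disjoint_left]
      intro z hz1 hz2
      simp only [Finset.mem_image, Finset.mem_filter, Finset.mem_univ, true_and] at hz1 hz2
      obtain ⟨h1, hh1, rfl⟩ := hz1
      obtain ⟨h2, hh2, heq⟩ := hz2
      apply hyH
      have hy2 : y = x₀ * h1 * h2⁻¹ := by
        rw [← heq]; group
      rw [hy2]
      simpa [mul_assoc] using H.mul_mem hh1 (H.inv_mem hh2)
    calc 2 * Nat.card H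
        = (((Finset.univ.filter (· ∈ H)).image (x₀ * ·))
            ∪ ((Finset.univ.filter (· ∈ H)).image (y * ·))).card := by
          rw [Finset.card_union_of_disjoint hdisj,
            Finset.card_image_of_injective _ (mul_right_injective x₀),
            Finset.card_image_of_injective _ (mul_right_injective y),
            card_filter_mem]
          ring
      _ ≤ α.coeff.support.card :=
          Finset.card_le_card (Finset.union_subset (hsub x₀ hx₀) (hsub y hys))
end

section
/- Let D be the dihedral group of order 2p^m, F a field with char(F) ∤ 2p^m, H_j = ⟨a^{p^j}⟩, e_j = Ĥ_j − Ĥ_{j−1} for 1 ≤ j ≤ m, and set H*_j = ⟨b⟩·H_j (the subgroup generated by b and a^{p^j}). Then the idempotent e₁₁ := ((1+b)/2)·e_j satisfies e₁₁ = Ĥ*_j − Ĥ*_{j−1}, and the left ideal (FD)e₁₁ has F-dimension φ(p^j) = p^{j−1}(p−1) and minimum Hamming weight 4p^{m−j}. -/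
open scoped Classical

open Finset DihedralGroup

namespace S6

variable {p m d : ℕ}

def K (p m d : ℕ) : AddSubgroup (ZMod (p^m)) := AddSubgroup.zmultiples ((p^d : ℕ) : ZMod (p^m))

lemma memK_int (hd : d ≤ m) (A : ℤ) : ((A : ZMod (p^m)) ∈ K p m d) ↔ (p:ℤ)^d ∣ A := by
  rw [K, AddSubgroup.mem_zmultiples_iff]
  constructor
  · rintro ⟨t, ht⟩
    rw [zsmul_eq_mul] at ht
    have h0 : ((t * p^d - A : ℤ) : ZMod (p^m)) = 0 := by
      push_cast
      rw [sub_eq_zero, ← ht]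
      push_cast; ring
    rw [ZMod.intCast_zmod_eq_zero_iff_dvd] at h0
    have h2 : (p:ℤ)^d ∣ t * p^d - A := by
      refine dvd_trans ?_ h0
      exact_mod_cast pow_dvd_pow (p:ℤ) hd
    have h4 : (p:ℤ)^d ∣ t * p^d := Dvd.intro_left t rfl
    have h5 : (p:ℤ)^d ∣ -(t * p^d - A) := dvd_neg.mpr h2
    have h6 : -(t * p^d - A) = A - t * p^d := by ring
    rw [h6] at h5
    have := dvd_add h5 h4
    simpa using this
  · rintro ⟨B, rfl⟩
    exact ⟨B, by rw [zsmul_eq_mul]; push_cast; ring⟩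



variable {p : ℕ} {j : ℕ}

lemma count_unique (hp : 0 < p) (W : ℤ) :
    ((range p).filter (fun t : ℕ => (p:ℤ) ∣ (W - (t:ℤ)))).card = 1 := by
  have hpz : (0:ℤ) < p := by exact_mod_cast hp
  rw [Finset.card_eq_one]
  refine ⟨(W % p).toNat, ?_⟩
  have h2 : 0 ≤ W % p := Int.emod_nonneg _ (by positivity)
  have h3 : W % p < p := Int.emod_lt_of_pos _ hpz
  have hmod : (p:ℤ) ∣ (W - W % p) := Int.dvd_self_sub_of_emod_eq rfl
  ext t
  simp only [mem_filter, mem_range, mem_singleton]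
  constructor
  · rintro ⟨ht, hd⟩
    have h4 : (t:ℤ) < p := by exact_mod_cast ht
    have h1 : (p:ℤ) ∣ (W % p - t) := by
      have := dvd_sub hd hmod
      have he : W - t - (W - W % p) = W % p - t := by ring
      rwa [he] at this
    obtain ⟨k, hk⟩ := h1
    have hk1 : k < 1 := by
      have : (p:ℤ) * k < p * 1 := by rw [← hk]; omega
      exact lt_of_mul_lt_mul_left this (le_of_lt hpz)
    have hk2 : (-1:ℤ) < k := by
      have : (p:ℤ) * (-1) < p * k := by rw [← hk]; omega
      exact lt_of_mul_lt_mul_left this (le_of_lt hpz)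
    have hk0 : k = 0 := by omega
    rw [hk0, mul_zero] at hk
    omega
  · rintro rfl
    have htn : ((W % p).toNat : ℤ) = W % p := Int.toNat_of_nonneg h2
    refine ⟨by omega, ?_⟩
    rw [htn]
    exact hmod

lemma count_unique' (hp : 0 < p) (W : ℤ) :
    ((range p).filter (fun t : ℕ => (p:ℤ) ∣ (W + (t:ℤ)))).card = 1 := by
  refine Eq.trans ?_ (count_unique hp (-W))
  congr 1
  apply Finset.filter_congr
  intro t _
  constructor
  · intro h
    have he : -W - t = -(W + t) := by ring
    rw [he]; exact dvd_neg.mpr h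
  · intro h
    have he : W + (t:ℤ) = -(-W - t) := by ring
    rw [he]; exact dvd_neg.mpr h

lemma keyCount (hp : p.Prime) (hj : 1 ≤ j) (V : ℤ) :
    ((range p).filter (fun t : ℕ => (p:ℤ)^j ∣ (V - (p:ℤ)^(j-1) * t))).card
      = if (p:ℤ)^(j-1) ∣ V then 1 else 0 := by
  have hc : ((p:ℤ)^(j-1)) ≠ 0 := by
    have := hp.pos; positivity
  have hpj : (p:ℤ)^j = (p:ℤ)^(j-1) * p := by rw [← pow_succ]; congr 1; omega
  split_ifs with h
  · obtain ⟨W, rfl⟩ := h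
    refine Eq.trans ?_ (count_unique hp.pos W)
    congr 1
    apply Finset.filter_congr
    intro t _
    rw [hpj, show (p:ℤ)^(j-1) * W - (p:ℤ)^(j-1) * t = (p:ℤ)^(j-1) * (W - t) by ring,
      mul_dvd_mul_iff_left hc]
  · rw [Finset.card_eq_zero, Finset.filter_eq_empty_iff]
    intro t _
    intro hdvd
    apply h
    have h1 : (p:ℤ)^(j-1) ∣ V - (p:ℤ)^(j-1) * t :=
      dvd_trans (pow_dvd_pow _ (by omega)) hdvd
    have h2 : (p:ℤ)^(j-1) ∣ (p:ℤ)^(j-1) * t := Dvd.intro t rfl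
    have := dvd_add h1 h2
    simpa using this

lemma keyCount' (hp : p.Prime) (hj : 1 ≤ j) (V : ℤ) :
    ((range p).filter (fun t : ℕ => (p:ℤ)^j ∣ (V + (p:ℤ)^(j-1) * t))).card
      = if (p:ℤ)^(j-1) ∣ V then 1 else 0 := by
  have h1 : ((range p).filter (fun t : ℕ => (p:ℤ)^j ∣ (V + (p:ℤ)^(j-1) * t)))
      = ((range p).filter (fun t : ℕ => (p:ℤ)^j ∣ (-V - (p:ℤ)^(j-1) * t))) := by
    apply Finset.filter_congr
    intro t _
    constructor
    · intro h
      have he : -V - (p:ℤ)^(j-1)*t = -(V + (p:ℤ)^(j-1)*t) := by ring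
      rw [he]; exact dvd_neg.mpr h
    · intro h
      have he : V + (p:ℤ)^(j-1)*t = -(-V - (p:ℤ)^(j-1)*t) := by ring
      rw [he]; exact dvd_neg.mpr h
  rw [h1, keyCount hp hj]
  simp [dvd_neg]

variable {N : ℕ}


variable {N : ℕ}

def toZ : DihedralGroup N → ZMod N
  | r i => i
  | sr i => i

@[simp] lemma toZ_r (i : ZMod N) : toZ (r i) = i := rfl
@[simp] lemma toZ_sr (i : ZMod N) : toZ (sr i) = i := rfl

def dih (A : AddSubgroup (ZMod N)) : Subgroup (DihedralGroup N) where
  carrier := {x | toZ x ∈ A}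
  mul_mem' := by
    rintro (⟨i⟩|⟨i⟩) (⟨k⟩|⟨k⟩) hi hk <;>
      simp only [Set.mem_setOf_eq, toZ_r, toZ_sr] at hi hk <;>
      · show toZ _ ∈ A
        simp only [r_mul_r, r_mul_sr, sr_mul_r, sr_mul_sr, toZ_r, toZ_sr]
        first
          | exact A.add_mem hi hk
          | exact A.sub_mem hk hi
  one_mem' := by
    show toZ 1 ∈ A
    rw [DihedralGroup.one_def]
    exact A.zero_mem
  inv_mem' := by
    rintro (⟨i⟩|⟨i⟩) hi <;> simp only [Set.mem_setOf_eq, toZ_r, toZ_sr] at hi ⊢ <;>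
      · show toZ _ ∈ A
        simp only [show (r i)⁻¹ = r (-i) from rfl, show (sr i)⁻¹ = sr i from rfl,
          toZ_r, toZ_sr]
        first
          | exact A.neg_mem hi
          | exact hi

@[simp] lemma mem_dih_r (A : AddSubgroup (ZMod N)) (i : ZMod N) :
    r i ∈ dih A ↔ i ∈ A := Iff.rfl

@[simp] lemma mem_dih_sr (A : AddSubgroup (ZMod N)) (i : ZMod N) :
    sr i ∈ dih A ↔ i ∈ A := Iff.rfl

lemma r_pow (c : ZMod N) (k : ℕ) : (r c : DihedralGroup N) ^ k = r (k • c) := by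
  induction k with
  | zero => rw [pow_zero, zero_nsmul, DihedralGroup.one_def]
  | succ k ih => rw [pow_succ, ih, r_mul_r, succ_nsmul]

lemma r_zpow (c : ZMod N) (t : ℤ) : (r c : DihedralGroup N) ^ t = r (t • c) := by
  cases t with
  | ofNat k => simpa using r_pow c k
  | negSucc k =>
      rw [zpow_negSucc, r_pow,
        show ((r ((k+1) • c) : DihedralGroup N))⁻¹ = r (-((k+1) • c)) from rfl]
      congr 1
      rw [negSucc_zsmul]

section Subgroups
variable {p m d : ℕ}


lemma mem_zpowers_r_iff (i : ZMod (p^m)) :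
    r i ∈ Subgroup.zpowers ((r 1 : DihedralGroup (p^m)) ^ (p^d)) ↔ i ∈ K p m d := by
  rw [r_one_pow, Subgroup.mem_zpowers_iff]
  constructor
  · rintro ⟨t, ht⟩
    rw [r_zpow] at ht
    have ht2 : t • ((p^d : ℕ) : ZMod (p^m)) = i := by
      injection ht
    exact ⟨t, ht2⟩
  · rintro ⟨t, ht⟩
    refine ⟨t, ?_⟩
    rw [r_zpow]
    exact congrArg DihedralGroup.r ht

lemma sr_not_mem_zpowers (i : ZMod (p^m)) :
    sr i ∉ Subgroup.zpowers ((r 1 : DihedralGroup (p^m)) ^ (p^d)) := by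
  rw [r_one_pow, Subgroup.mem_zpowers_iff]
  rintro ⟨t, ht⟩
  rw [r_zpow] at ht
  exact absurd ht (by simp)

lemma closure_eq_dih :
    Subgroup.closure {(sr 0 : DihedralGroup (p^m)), (r 1) ^ (p^d)} = dih (K p m d) := by
  apply le_antisymm
  · rw [Subgroup.closure_le]
    rintro x (rfl | rfl)
    · show toZ _ ∈ K p m d
      simpa using (K p m d).zero_mem
    · rw [r_one_pow]
      show ((p^d : ℕ) : ZMod (p^m)) ∈ K p m d
      exact ⟨1, one_zsmul _⟩
  · intro x hx
    have hb : (sr 0 : DihedralGroup (p^m)) ∈ Subgroup.closure {(sr 0 : DihedralGroup (p^m)), (r 1) ^ (p^d)} :=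
      Subgroup.subset_closure (by left; rfl)
    have ha : ((r 1 : DihedralGroup (p^m)) ^ (p^d)) ∈ Subgroup.closure {(sr 0 : DihedralGroup (p^m)), (r 1) ^ (p^d)} :=
      Subgroup.subset_closure (by right; rfl)
    have key : ∀ i : ZMod (p^m), i ∈ K p m d →
        r i ∈ Subgroup.closure {(sr 0 : DihedralGroup (p^m)), (r 1) ^ (p^d)} := by
      rintro i ⟨t, ht⟩
      have : ((r 1 : DihedralGroup (p^m)) ^ (p^d)) ^ t = r i := by
        rw [r_one_pow, r_zpow]
        exact congrArg DihedralGroup.r ht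
      rw [← this]
      exact Subgroup.zpow_mem _ ha t
    cases x with
    | r i => exact key i hx
    | sr i =>
        have : (sr i : DihedralGroup (p^m)) = sr 0 * r i := by
          rw [sr_mul_r, zero_add]
        rw [this]
        exact Subgroup.mul_mem _ hb (key i hx)

lemma card_K (hp : p.Prime) (hd : d ≤ m) : Nat.card (K p m d) = p^(m-d) := by
  have hn : (p:ℕ)^m ≠ 0 := (pow_pos hp.pos m).ne'
  rw [K, Nat.card_zmultiples, ZMod.addOrderOf_coe _ hn,
    Nat.gcd_eq_right (pow_dvd_pow p hd), Nat.pow_div hd hp.pos]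

lemma card_filter_K [NeZero (p^m)] (hp : p.Prime) (hd : d ≤ m) :
    ((Finset.univ : Finset (ZMod (p^m))).filter (fun i => i ∈ K p m d)).card = p^(m-d) := by
  rw [← card_K hp hd, Nat.card_eq_fintype_card, Fintype.card_subtype]

def dihEquiv (A : AddSubgroup (ZMod N)) : (dih A : Subgroup (DihedralGroup N)) ≃ Bool × A where
  toFun x := match x with
    | ⟨r i, h⟩ => (false, ⟨i, h⟩)
    | ⟨sr i, h⟩ => (true, ⟨i, h⟩)
  invFun y := match y with
    | (false, ⟨i, h⟩) => ⟨r i, h⟩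
    | (true, ⟨i, h⟩) => ⟨sr i, h⟩
  left_inv := by rintro ⟨(i|i), h⟩ <;> rfl
  right_inv := by rintro ⟨(_|_), i, h⟩ <;> rfl

lemma card_dih (A : AddSubgroup (ZMod N)) : Nat.card (dih A) = 2 * Nat.card A := by
  rw [Nat.card_congr (dihEquiv A), Nat.card_prod]
  congr 1
  simp [Nat.card_eq_fintype_card]

lemma card_dih_K (hp : p.Prime) (hd : d ≤ m) :
    Nat.card (dih (K p m d)) = 2 * p^(m-d) := by
  rw [card_dih, card_K hp hd]

end Subgroups

section Hat
variable {F : Type*} [Field F] {G : Type*} [Group G] [Fintype G]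

lemma hat_apply (S : Subgroup G) (x : G) :
    (hat F S).coeff x = (Nat.card S : F)⁻¹ * (if x ∈ S then 1 else 0) := by
  rw [hat, MonoidAlgebra.coeff_smul_apply, MonoidAlgebra.coeff_sum, Finsupp.finset_sum_apply, smul_eq_mul]
  congr 1
  have h1 : ∀ g : G, ((if g ∈ S then MonoidAlgebra.of F G g else 0) : MonoidAlgebra F G).coeff x
      = if g = x then (if x ∈ S then (1:F) else 0) else 0 := by
    intro g
    rcases eq_or_ne g x with rfl | hgx
    · by_cases hg : g ∈ S <;> simp [hg, MonoidAlgebra.of_apply, Finsupp.single_apply]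
    · by_cases hg : g ∈ S <;> simp [hg, hgx, MonoidAlgebra.of_apply, Finsupp.single_apply]
  rw [Finset.sum_congr rfl (fun g _ => h1 g), Finset.sum_ite_eq' Finset.univ x
    (fun _ => (if x ∈ S then (1:F) else 0))]
  simp

lemma of_mul_hat (S : Subgroup G) {g : G} (hg : g ∈ S) :
    MonoidAlgebra.of F G g * hat F S = hat F S := by
  apply MonoidAlgebra.ext; apply Finsupp.ext
  intro y
  rw [MonoidAlgebra.of_apply, MonoidAlgebra.coeff_single_mul_apply, hat_apply, hat_apply, one_mul]
  congr 2
  simp only [eq_iff_iff]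
  exact S.mul_mem_cancel_left (S.inv_mem hg)

lemma hat_mul_of (S : Subgroup G) {g : G} (hg : g ∈ S) :
    hat F S * MonoidAlgebra.of F G g = hat F S := by
  apply MonoidAlgebra.ext; apply Finsupp.ext
  intro y
  rw [MonoidAlgebra.of_apply, MonoidAlgebra.coeff_mul_single_apply, hat_apply, hat_apply, mul_one]
  congr 2
  simp only [eq_iff_iff]
  exact S.mul_mem_cancel_right (S.inv_mem hg)

end Hat

section HatD
variable {F : Type*} [Field F] {p m d : ℕ} [NeZero (p^m)]

lemma card_zpowers_a (hp : p.Prime) (hd : d ≤ m) :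
    Nat.card (Subgroup.zpowers ((r 1 : DihedralGroup (p^m))^(p^d))) = p^(m-d) := by
  rw [Nat.card_zpowers, orderOf_pow, DihedralGroup.orderOf_r_one,
    Nat.gcd_eq_right (pow_dvd_pow p hd), Nat.pow_div hd hp.pos]

lemma hatH_r (hp : p.Prime) (hd : d ≤ m) (i : ZMod (p^m)) :
    (hat F (Subgroup.zpowers ((r 1 : DihedralGroup (p^m))^(p^d)))).coeff (r i)
      = ((p^(m-d) : ℕ) : F)⁻¹ * (if i ∈ K p m d then 1 else 0) := by
  rw [hat_apply, card_zpowers_a hp hd]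
  congr 2
  simp only [eq_iff_iff]
  exact mem_zpowers_r_iff i

lemma hatH_sr (hp : p.Prime) (hd : d ≤ m) (i : ZMod (p^m)) :
    (hat F (Subgroup.zpowers ((r 1 : DihedralGroup (p^m))^(p^d)))).coeff (sr i) = 0 := by
  rw [hat_apply, if_neg (sr_not_mem_zpowers i), mul_zero]

lemma hatD_apply (hp : p.Prime) (hd : d ≤ m) (x : DihedralGroup (p^m)) :
    (hat F (dih (K p m d))).coeff x
      = ((2 * p^(m-d) : ℕ) : F)⁻¹ * (if toZ x ∈ K p m d then 1 else 0) := by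
  rw [hat_apply, card_dih_K hp hd]
  cases x <;> rfl

lemma partA (hp : p.Prime) (hd : d ≤ m) (h2 : (2:F) ≠ 0) :
    ((2:F)⁻¹ • (1 + MonoidAlgebra.of F (DihedralGroup (p^m)) (sr 0)))
        * hat F (Subgroup.zpowers ((r 1 : DihedralGroup (p^m))^(p^d)))
      = hat F (dih (K p m d)) := by
  rw [smul_mul_assoc]
  apply MonoidAlgebra.ext; apply Finsupp.ext
  intro x
  rw [MonoidAlgebra.coeff_smul_apply, add_mul, one_mul, MonoidAlgebra.coeff_add, Finsupp.add_apply, hatD_apply hp hd]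
  have hb : (MonoidAlgebra.of F (DihedralGroup (p^m)) (sr 0)
        * hat F (Subgroup.zpowers ((r 1 : DihedralGroup (p^m))^(p^d)))).coeff x
      = (hat F (Subgroup.zpowers ((r 1 : DihedralGroup (p^m))^(p^d)))).coeff ((sr 0)⁻¹ * x) := by
    rw [MonoidAlgebra.of_apply, MonoidAlgebra.coeff_single_mul_apply, one_mul]
  rw [hb]
  have key : ∀ c : F, (2:F)⁻¹ * (((p^(m-d) : ℕ) : F)⁻¹ * c) = ((2 * p^(m-d) : ℕ) : F)⁻¹ * c := by
    intro c
    push_cast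
    rw [mul_inv]
    ring
  cases x with
  | r i =>
      have : ((sr 0 : DihedralGroup (p^m))⁻¹ * r i) = sr i := by
        show (sr 0 : DihedralGroup (p^m)) * r i = sr i
        rw [sr_mul_r, zero_add]
      rw [this, hatH_r hp hd, hatH_sr hp hd, add_zero, smul_eq_mul, toZ_r]
      exact key _
  | sr i =>
      have : ((sr 0 : DihedralGroup (p^m))⁻¹ * sr i) = r i := by
        show (sr 0 : DihedralGroup (p^m)) * sr i = r i
        rw [sr_mul_sr, sub_zero]
      rw [this, hatH_r hp hd, hatH_sr hp hd, zero_add, smul_eq_mul, toZ_sr]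
      exact key _

end HatD

section Coef
variable {F : Type*} [Field F] {G : Type*} [Group G]

lemma of_mul_apply (g : G) (β : MonoidAlgebra F G) (x : G) :
    (MonoidAlgebra.of F G g * β).coeff x = β.coeff (g⁻¹ * x) := by
  rw [MonoidAlgebra.of_apply, MonoidAlgebra.coeff_single_mul_apply, one_mul]

lemma mul_of_apply (g : G) (β : MonoidAlgebra F G) (x : G) :
    (β * MonoidAlgebra.of F G g).coeff x = β.coeff (x * g⁻¹) := by
  rw [MonoidAlgebra.of_apply, MonoidAlgebra.coeff_mul_single_apply, mul_one]

end Coef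

section NRel
variable {F : Type*} [Field F] {p m j : ℕ} [NeZero (p^m)]

lemma cast_mem_K (d : ℕ) (hd : d ≤ m) (k : ℕ) (hdvd : p^d ∣ k) :
    ((k : ZMod (p^m)) ∈ K p m d) := by
  have : ((k:ℤ) : ZMod (p^m)) ∈ K p m d := by
    rw [memK_int hd]
    exact_mod_cast Int.natCast_dvd_natCast.mpr hdvd
  simpa using this

lemma sum_ite_K_sub (hp : p.Prime) (hj : 1 ≤ j) (hjm : j ≤ m) (i : ZMod (p^m)) :
    ∑ t ∈ Finset.range p, (if (i - ((p^(j-1) * t : ℕ) : ZMod (p^m))) ∈ K p m j then (1:F) else 0)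
      = if i ∈ K p m (j-1) then 1 else 0 := by
  have hi : i = ((i.val : ℤ) : ZMod (p^m)) := by
    rw [Int.cast_natCast, ZMod.natCast_val, ZMod.cast_id]
  have hcond : ∀ t : ℕ, ((i - ((p^(j-1) * t : ℕ) : ZMod (p^m))) ∈ K p m j)
      ↔ (p:ℤ)^j ∣ ((i.val : ℤ) - (p:ℤ)^(j-1)*t) := by
    intro t
    conv_lhs => rw [hi]
    rw [show (((i.val:ℤ) : ZMod (p^m)) - ((p^(j-1)*t : ℕ) : ZMod (p^m)))
        = (((i.val:ℤ) - (p:ℤ)^(j-1)*t : ℤ) : ZMod (p^m)) by push_cast; ring]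
    exact memK_int hjm _
  simp only [hcond]
  rw [Finset.sum_boole, keyCount hp hj]
  have hlast : (p:ℤ)^(j-1) ∣ (i.val:ℤ) ↔ i ∈ K p m (j-1) := by
    rw [← memK_int (le_trans (Nat.sub_le j 1) hjm), ← hi]
  rw [← hlast]
  split_ifs <;> simp

lemma sum_ite_K_add (hp : p.Prime) (hj : 1 ≤ j) (hjm : j ≤ m) (i : ZMod (p^m)) :
    ∑ t ∈ Finset.range p, (if (i + ((p^(j-1) * t : ℕ) : ZMod (p^m))) ∈ K p m j then (1:F) else 0)
      = if i ∈ K p m (j-1) then 1 else 0 := by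
  have hi : i = ((i.val : ℤ) : ZMod (p^m)) := by
    rw [Int.cast_natCast, ZMod.natCast_val, ZMod.cast_id]
  have hcond : ∀ t : ℕ, ((i + ((p^(j-1) * t : ℕ) : ZMod (p^m))) ∈ K p m j)
      ↔ (p:ℤ)^j ∣ ((i.val : ℤ) + (p:ℤ)^(j-1)*t) := by
    intro t
    conv_lhs => rw [hi]
    rw [show (((i.val:ℤ) : ZMod (p^m)) + ((p^(j-1)*t : ℕ) : ZMod (p^m)))
        = (((i.val:ℤ) + (p:ℤ)^(j-1)*t : ℤ) : ZMod (p^m)) by push_cast; ring]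
    exact memK_int hjm _
  simp only [hcond]
  rw [Finset.sum_boole, keyCount' hp hj]
  have hlast : (p:ℤ)^(j-1) ∣ (i.val:ℤ) ↔ i ∈ K p m (j-1) := by
    rw [← memK_int (le_trans (Nat.sub_le j 1) hjm), ← hi]
  rw [← hlast]
  split_ifs <;> simp

end NRel

section NElem
variable (F : Type*) [Field F] (p m j : ℕ) [NeZero (p^m)]

noncomputable def Nel : MonoidAlgebra F (DihedralGroup (p^m)) :=
  ∑ t ∈ Finset.range p, MonoidAlgebra.of F (DihedralGroup (p^m)) ((r 1)^(p^(j-1) * t))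

variable {F p m j}

lemma scalar_id (hj : 1 ≤ j) (hjm : j ≤ m) (hpF : (p:F) ≠ 0) :
    ((2 * p^(m-j) : ℕ) : F)⁻¹ = (p:F) * ((2 * p^(m-(j-1)) : ℕ) : F)⁻¹ := by
  have he : m - (j-1) = (m - j) + 1 := by omega
  rw [he]
  push_cast
  rcases eq_or_ne ((2:F)) 0 with h2 | h2
  · simp [h2]
  · rw [pow_succ]
    field_simp

lemma pow_mem_dih (d t : ℕ) (hd : d ≤ m) :
    (r 1 : DihedralGroup (p^m))^(p^d * t) ∈ dih (K p m d) := by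
  rw [r_one_pow, mem_dih_r]
  exact cast_mem_K d hd _ ⟨t, rfl⟩

lemma b_mem_dih (d : ℕ) : (sr 0 : DihedralGroup (p^m)) ∈ dih (K p m d) := by
  rw [mem_dih_sr]
  exact (K p m d).zero_mem

lemma rpow_inv (v : ZMod (p^m)) : (r v : DihedralGroup (p^m))⁻¹ = r (-v) := rfl

lemma N_mul_hat_j (hp : p.Prime) (hj : 1 ≤ j) (hjm : j ≤ m) (hpF : (p:F) ≠ 0) :
    Nel F p m j * hat F (dih (K p m j)) = (p:F) • hat F (dih (K p m (j-1))) := by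
  have hj1m : j - 1 ≤ m := le_trans (Nat.sub_le j 1) hjm
  apply MonoidAlgebra.ext; apply Finsupp.ext
  intro x
  rw [Nel, Finset.sum_mul, MonoidAlgebra.coeff_sum, Finsupp.finset_sum_apply, MonoidAlgebra.coeff_smul_apply, smul_eq_mul,
    hatD_apply hp hj1m]
  cases x with
  | r i =>
      have hterm : ∀ t ∈ Finset.range p,
          (MonoidAlgebra.of F (DihedralGroup (p^m)) ((r 1)^(p^(j-1) * t))
              * hat F (dih (K p m j))).coeff (r i)
            = ((2 * p^(m-j) : ℕ) : F)⁻¹ *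
                (if i - ((p^(j-1)*t : ℕ) : ZMod (p^m)) ∈ K p m j then (1:F) else 0) := by
        intro t _
        rw [of_mul_apply, r_one_pow, rpow_inv, r_mul_r, neg_add_eq_sub,
          hatD_apply hp hjm, toZ_r]
      rw [Finset.sum_congr rfl hterm, ← Finset.mul_sum, sum_ite_K_sub hp hj hjm i, toZ_r,
        scalar_id hj hjm hpF]
      ring
  | sr i =>
      have hterm : ∀ t ∈ Finset.range p,
          (MonoidAlgebra.of F (DihedralGroup (p^m)) ((r 1)^(p^(j-1) * t))
              * hat F (dih (K p m j))).coeff (sr i)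
            = ((2 * p^(m-j) : ℕ) : F)⁻¹ *
                (if i + ((p^(j-1)*t : ℕ) : ZMod (p^m)) ∈ K p m j then (1:F) else 0) := by
        intro t _
        rw [of_mul_apply, r_one_pow, rpow_inv, r_mul_sr, sub_neg_eq_add,
          hatD_apply hp hjm, toZ_sr]
      rw [Finset.sum_congr rfl hterm, ← Finset.mul_sum, sum_ite_K_add hp hj hjm i, toZ_sr,
        scalar_id hj hjm hpF]
      ring

lemma hat_j_mul_N (hp : p.Prime) (hj : 1 ≤ j) (hjm : j ≤ m) (hpF : (p:F) ≠ 0) :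
    hat F (dih (K p m j)) * Nel F p m j = (p:F) • hat F (dih (K p m (j-1))) := by
  have hj1m : j - 1 ≤ m := le_trans (Nat.sub_le j 1) hjm
  apply MonoidAlgebra.ext; apply Finsupp.ext
  intro x
  rw [Nel, Finset.mul_sum, MonoidAlgebra.coeff_sum, Finsupp.finset_sum_apply, MonoidAlgebra.coeff_smul_apply, smul_eq_mul,
    hatD_apply hp hj1m]
  cases x with
  | r i =>
      have hterm : ∀ t ∈ Finset.range p,
          (hat F (dih (K p m j))
              * MonoidAlgebra.of F (DihedralGroup (p^m)) ((r 1)^(p^(j-1) * t))).coeff (r i)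
            = ((2 * p^(m-j) : ℕ) : F)⁻¹ *
                (if i - ((p^(j-1)*t : ℕ) : ZMod (p^m)) ∈ K p m j then (1:F) else 0) := by
        intro t _
        rw [mul_of_apply, r_one_pow, rpow_inv, r_mul_r, ← sub_eq_add_neg,
          hatD_apply hp hjm, toZ_r]
      rw [Finset.sum_congr rfl hterm, ← Finset.mul_sum, sum_ite_K_sub hp hj hjm i, toZ_r,
        scalar_id hj hjm hpF]
      ring
  | sr i =>
      have hterm : ∀ t ∈ Finset.range p,
          (hat F (dih (K p m j))
              * MonoidAlgebra.of F (DihedralGroup (p^m)) ((r 1)^(p^(j-1) * t))).coeff (sr i)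
            = ((2 * p^(m-j) : ℕ) : F)⁻¹ *
                (if i - ((p^(j-1)*t : ℕ) : ZMod (p^m)) ∈ K p m j then (1:F) else 0) := by
        intro t _
        rw [mul_of_apply, r_one_pow, rpow_inv, sr_mul_r, ← sub_eq_add_neg,
          hatD_apply hp hjm, toZ_sr]
      rw [Finset.sum_congr rfl hterm, ← Finset.mul_sum, sum_ite_K_sub hp hj hjm i, toZ_sr,
        scalar_id hj hjm hpF]
      ring

lemma N_mul_hat_j1 (hjm : j ≤ m) :
    Nel F p m j * hat F (dih (K p m (j-1))) = (p:F) • hat F (dih (K p m (j-1))) := by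
  have hj1m : j - 1 ≤ m := le_trans (Nat.sub_le j 1) hjm
  rw [Nel, Finset.sum_mul,
    Finset.sum_congr rfl (fun t _ => of_mul_hat (dih (K p m (j-1))) (pow_mem_dih (j-1) t hj1m)),
    Finset.sum_const, Finset.card_range, ← Nat.cast_smul_eq_nsmul F]

lemma hat_j1_mul_N (hjm : j ≤ m) :
    hat F (dih (K p m (j-1))) * Nel F p m j = (p:F) • hat F (dih (K p m (j-1))) := by
  have hj1m : j - 1 ≤ m := le_trans (Nat.sub_le j 1) hjm
  rw [Nel, Finset.mul_sum,
    Finset.sum_congr rfl (fun t _ => hat_mul_of (dih (K p m (j-1))) (pow_mem_dih (j-1) t hj1m)),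
    Finset.sum_const, Finset.card_range, ← Nat.cast_smul_eq_nsmul F]

lemma N_mul_e1 (hp : p.Prime) (hj : 1 ≤ j) (hjm : j ≤ m) (hpF : (p:F) ≠ 0) :
    Nel F p m j * (hat F (dih (K p m j)) - hat F (dih (K p m (j-1)))) = 0 := by
  rw [mul_sub, N_mul_hat_j hp hj hjm hpF, N_mul_hat_j1 hjm, sub_self]

lemma e1_mul_N (hp : p.Prime) (hj : 1 ≤ j) (hjm : j ≤ m) (hpF : (p:F) ≠ 0) :
    (hat F (dih (K p m j)) - hat F (dih (K p m (j-1)))) * Nel F p m j = 0 := by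
  rw [sub_mul, hat_j_mul_N hp hj hjm hpF, hat_j1_mul_N hjm, sub_self]

end NElem

section PartB
variable {F : Type*} [Field F] {p m j : ℕ} [NeZero (p^m)]

lemma int_dvd_iff_eq {P a b : ℕ} (hP : 0 < P) (ha : a < P) (hb : b < P) :
    (P:ℤ) ∣ (a:ℤ) - b ↔ a = b := by
  constructor
  · rintro ⟨t, ht⟩
    have hPz : (0:ℤ) < P := by exact_mod_cast hP
    have h1 : t < 1 := by
      have : (P:ℤ) * t < P * 1 := by rw [← ht]; omega
      exact lt_of_mul_lt_mul_left this (le_of_lt hPz)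
    have h2 : (-1:ℤ) < t := by
      have : (P:ℤ) * (-1) < P * t := by rw [← ht]; omega
      exact lt_of_mul_lt_mul_left this (le_of_lt hPz)
    have ht0 : t = 0 := by omega
    rw [ht0, mul_zero] at ht
    omega
  · rintro rfl
    simp

noncomputable def e1 (F : Type*) [Field F] (p m j : ℕ) [NeZero (p^m)] :
    MonoidAlgebra F (DihedralGroup (p^m)) :=
  hat F (dih (K p m j)) - hat F (dih (K p m (j-1)))

lemma pow_mem_dih' (hj : 1 ≤ j) (hjm : j ≤ m) (s : ℕ) :
    (r 1 : DihedralGroup (p^m))^(p^j * s) ∈ dih (K p m (j-1)) := by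
  rw [r_one_pow, mem_dih_r]
  exact cast_mem_K (j-1) (le_trans (Nat.sub_le j 1) hjm) _
    (dvd_mul_of_dvd_left (pow_dvd_pow p (Nat.sub_le j 1)) s)

lemma of_b_mul_e1 : MonoidAlgebra.of F (DihedralGroup (p^m)) (sr 0) * e1 F p m j = e1 F p m j := by
  rw [e1, mul_sub, of_mul_hat _ (b_mem_dih j), of_mul_hat _ (b_mem_dih (j-1))]

lemma e1_mul_of_b : e1 F p m j * MonoidAlgebra.of F (DihedralGroup (p^m)) (sr 0) = e1 F p m j := by
  rw [e1, sub_mul, hat_mul_of _ (b_mem_dih j), hat_mul_of _ (b_mem_dih (j-1))]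

lemma of_apow_mul_e1 (hj : 1 ≤ j) (hjm : j ≤ m) (s : ℕ) :
    MonoidAlgebra.of F (DihedralGroup (p^m)) ((r 1)^(p^j * s)) * e1 F p m j = e1 F p m j := by
  rw [e1, mul_sub, of_mul_hat _ (pow_mem_dih j s hjm), of_mul_hat _ (pow_mem_dih' hj hjm s)]

lemma e1_mul_of_apow (hj : 1 ≤ j) (hjm : j ≤ m) (s : ℕ) :
    e1 F p m j * MonoidAlgebra.of F (DihedralGroup (p^m)) ((r 1)^(p^j * s)) = e1 F p m j := by
  rw [e1, sub_mul, hat_mul_of _ (pow_mem_dih j s hjm), hat_mul_of _ (pow_mem_dih' hj hjm s)]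

lemma of_rpow_mul_e1_mem (hp : p.Prime) (hj : 1 ≤ j) (hjm : j ≤ m) (hpF : (p:F) ≠ 0) (k : ℕ) :
    MonoidAlgebra.of F (DihedralGroup (p^m)) ((r 1)^k) * e1 F p m j ∈
      Submodule.span F (Set.range (fun i : Fin (p^(j-1)*(p-1)) =>
        MonoidAlgebra.of F (DihedralGroup (p^m)) ((r 1)^(i:ℕ)) * e1 F p m j)) := by
  induction k using Nat.strong_induction_on with
  | _ k IH =>
    rcases lt_or_ge k (p^(j-1)*(p-1)) with hk | hk
    · exact Submodule.subset_span ⟨⟨k, hk⟩, rfl⟩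
    rcases le_or_gt (p^j) k with hk2 | hk2
    · -- reduce k by p^j
      have hkk : k = (k - p^j) + p^j * 1 := by
        have := pow_pos hp.pos j
        omega
      have : MonoidAlgebra.of F (DihedralGroup (p^m)) ((r 1)^k) * e1 F p m j
          = MonoidAlgebra.of F (DihedralGroup (p^m)) ((r 1)^(k - p^j)) * e1 F p m j := by
        conv_lhs => rw [hkk]
        rw [pow_add, map_mul, mul_assoc, of_apow_mul_e1 hj hjm 1]
      rw [this]
      exact IH _ (by have := pow_pos hp.pos j; omega)
    · -- p^(j-1)*(p-1) ≤ k < p^j : use the N relation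
      set cc := p^(j-1) with hcc
      have hp1 : 1 ≤ p := hp.pos
      have hmul1 : cc * (p-1) + cc = cc * p := by
        have hq : p - 1 + 1 = p := by omega
        calc cc * (p-1) + cc = cc * ((p-1)+1) := by ring
          _ = cc * p := by rw [hq]
      have hpj : p^j = cc * p := by rw [hcc, ← pow_succ]; congr 1; omega
      set s := k - cc*(p-1) with hs
      have hps : s + cc * (p-1) = k := by omega
      have hscc : s < cc := by omega
      have h0 : ∑ t ∈ Finset.range p,
          MonoidAlgebra.of F (DihedralGroup (p^m)) ((r 1)^(s + cc * t)) * e1 F p m j = 0 := by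
        have hN : Nel F p m j * e1 F p m j = 0 := by
          rw [e1]; exact N_mul_e1 hp hj hjm hpF
        have hexp : MonoidAlgebra.of F (DihedralGroup (p^m)) ((r 1)^s) * (Nel F p m j * e1 F p m j)
            = ∑ t ∈ Finset.range p,
              MonoidAlgebra.of F (DihedralGroup (p^m)) ((r 1)^(s + cc * t)) * e1 F p m j := by
          rw [Nel, Finset.sum_mul, Finset.mul_sum]
          apply Finset.sum_congr rfl
          intro t _
          rw [← mul_assoc, ← map_mul, ← pow_add]
        rw [← hexp, hN, mul_zero]
      have hmem : (p-1) ∈ Finset.range p := by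
        simp [Nat.sub_lt hp.pos Nat.one_pos]
      have hsplit := Finset.add_sum_erase (Finset.range p)
        (fun t => MonoidAlgebra.of F (DihedralGroup (p^m)) ((r 1)^(s + cc * t)) * e1 F p m j) hmem
      rw [← hsplit] at h0
      simp only [hps] at h0
      have heq : MonoidAlgebra.of F (DihedralGroup (p^m)) ((r 1)^k) * e1 F p m j
          = - ∑ t ∈ (Finset.range p).erase (p-1),
              MonoidAlgebra.of F (DihedralGroup (p^m)) ((r 1)^(s + cc * t)) * e1 F p m j := by
        exact eq_neg_of_add_eq_zero_left h0
      rw [heq]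
      apply Submodule.neg_mem
      apply Submodule.sum_mem
      intro t ht
      rcases Finset.mem_erase.mp ht with ⟨htne, htlt⟩
      rw [Finset.mem_range] at htlt
      apply IH
      have hmul2 : cc * t ≤ cc * (p-2) := Nat.mul_le_mul_left _ (by omega)
      have h2p := hp.two_le
      have hmul3 : cc * (p-2) + cc = cc * (p-1) := by
        have hq : p - 2 + 1 = p - 1 := by omega
        calc cc * (p-2) + cc = cc * ((p-2)+1) := by ring
          _ = cc * (p-1) := by rw [hq]
      omega
end PartB

section PartB2
variable {F : Type*} [Field F] {p m j : ℕ} [NeZero (p^m)]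

lemma of_mul_e1_mem (hp : p.Prime) (hj : 1 ≤ j) (hjm : j ≤ m) (hpF : (p:F) ≠ 0)
    (g : DihedralGroup (p^m)) :
    MonoidAlgebra.of F (DihedralGroup (p^m)) g * e1 F p m j ∈
      Submodule.span F (Set.range (fun i : Fin (p^(j-1)*(p-1)) =>
        MonoidAlgebra.of F (DihedralGroup (p^m)) ((r 1)^(i:ℕ)) * e1 F p m j)) := by
  cases g with
  | r i =>
      have : (r i : DihedralGroup (p^m)) = (r 1)^(i.val) := by
        rw [r_one_pow, ZMod.natCast_val, ZMod.cast_id]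
      rw [this]
      exact of_rpow_mul_e1_mem hp hj hjm hpF i.val
  | sr i =>
      have hfac : (sr i : DihedralGroup (p^m)) = r (-i) * sr 0 := by
        rw [r_mul_sr, zero_sub, neg_neg]
      have hri : (r (-i) : DihedralGroup (p^m)) = (r 1)^((-i : ZMod (p^m)).val) := by
        rw [r_one_pow, ZMod.natCast_val, ZMod.cast_id]
      rw [hfac, map_mul, mul_assoc, of_b_mul_e1, hri]
      exact of_rpow_mul_e1_mem hp hj hjm hpF _

lemma span_eq (hp : p.Prime) (hj : 1 ≤ j) (hjm : j ≤ m) (hpF : (p:F) ≠ 0) :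
    Submodule.restrictScalars F (Ideal.span {e1 F p m j})
      = Submodule.span F (Set.range (fun i : Fin (p^(j-1)*(p-1)) =>
          MonoidAlgebra.of F (DihedralGroup (p^m)) ((r 1)^(i:ℕ)) * e1 F p m j)) := by
  apply le_antisymm
  · intro x hx
    rw [Submodule.restrictScalars_mem, Ideal.span, Submodule.mem_span_singleton] at hx
    obtain ⟨c, rfl⟩ := hx
    rw [smul_eq_mul]
    induction c using MonoidAlgebra.induction_linear with
    | zero => rw [zero_mul]; exact Submodule.zero_mem _
    | add f g hf hg => rw [add_mul]; exact Submodule.add_mem _ hf hg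
    | single g a =>
        have hsm : (MonoidAlgebra.single g a : MonoidAlgebra F (DihedralGroup (p^m)))
            = a • MonoidAlgebra.of F (DihedralGroup (p^m)) g := by
          rw [MonoidAlgebra.of_apply, MonoidAlgebra.smul_single', mul_one]
        rw [hsm, smul_mul_assoc]
        exact Submodule.smul_mem _ a (of_mul_e1_mem hp hj hjm hpF g)
  · rw [Submodule.span_le]
    rintro x ⟨i, rfl⟩
    rw [SetLike.mem_coe, Submodule.restrictScalars_mem, Ideal.span, Submodule.mem_span_singleton]
    refine ⟨MonoidAlgebra.of F (DihedralGroup (p^m)) ((r 1)^(i:ℕ)), ?_⟩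
    rw [smul_eq_mul]

end PartB2

section Indep
variable {F : Type*} [Field F] {p m j : ℕ} [NeZero (p^m)]

lemma char2 (hm : 1 ≤ m) (hchar : ((2*p^m : ℕ):F) ≠ 0) : (2:F) ≠ 0 ∧ (p:F) ≠ 0 := by
  have h : (2:F) * (p:F)^m ≠ 0 := by
    intro h0
    apply hchar
    push_cast
    exact h0
  rcases mul_ne_zero_iff.mp h with ⟨h2, hpm⟩
  exact ⟨h2, fun h0 => hpm (by rw [h0]; exact zero_pow (by omega))⟩

lemma charC (hm : 1 ≤ m) (hchar : ((2*p^m : ℕ):F) ≠ 0) (d : ℕ) :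
    ((2*p^d : ℕ):F) ≠ 0 := by
  obtain ⟨h2, hpF⟩ := char2 hm hchar
  intro h0
  rw [show ((2*p^d : ℕ):F) = 2 * (p:F)^d by push_cast; ring] at h0
  exact (mul_ne_zero h2 (pow_ne_zero _ hpF)) h0

lemma memK_sub_iff_j (hp : p.Prime) (hjm : j ≤ m) {k i : ℕ} (hk : k < p^j) (hi : i < p^j) :
    ((k : ZMod (p^m)) - i ∈ K p m j) ↔ k = i := by
  have hsub : ((k : ZMod (p^m)) - i) = (((k:ℤ) - i : ℤ) : ZMod (p^m)) := by push_cast; ring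
  rw [hsub, memK_int hjm, show (p:ℤ)^j = ((p^j : ℕ) : ℤ) by push_cast; rfl]
  exact int_dvd_iff_eq (pow_pos hp.pos j) hk hi

lemma memK_sub_iff_j1 (hjm : j ≤ m) (k i : ℕ) :
    ((k : ZMod (p^m)) - i ∈ K p m (j-1)) ↔ k % p^(j-1) = i % p^(j-1) := by
  have hsub : ((k : ZMod (p^m)) - i) = (((k:ℤ) - i : ℤ) : ZMod (p^m)) := by push_cast; ring
  rw [hsub, memK_int (le_trans (Nat.sub_le j 1) hjm),
    show (p:ℤ)^(j-1) = ((p^(j-1) : ℕ) : ℤ) by push_cast; rfl, ← Nat.modEq_iff_dvd]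
  constructor
  · intro h
    exact Nat.ModEq.symm h
  · intro h
    exact Nat.ModEq.symm h

lemma coeff_v (hp : p.Prime) (hjm : j ≤ m) {i k : ℕ} (hi : i < p^j) (hk : k < p^j) :
    (MonoidAlgebra.of F (DihedralGroup (p^m)) ((r 1)^i) * e1 F p m j).coeff (r (k : ZMod (p^m)))
      = (if k = i then ((2*p^(m-j) : ℕ):F)⁻¹ else 0)
        - (if k % p^(j-1) = i % p^(j-1) then ((2*p^(m-(j-1)) : ℕ):F)⁻¹ else 0) := by
  rw [e1, of_mul_apply, r_one_pow, rpow_inv, r_mul_r, neg_add_eq_sub, MonoidAlgebra.coeff_sub, Finsupp.sub_apply,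
    hatD_apply hp hjm, hatD_apply hp (le_trans (Nat.sub_le j 1) hjm), toZ_r,
    mul_ite, mul_one, mul_zero, mul_ite, mul_one, mul_zero]
  congr 1
  · exact if_congr (memK_sub_iff_j hp hjm hk hi) rfl rfl
  · exact if_congr (memK_sub_iff_j1 hjm k i) rfl rfl

lemma indep (hp : p.Prime) (hj : 1 ≤ j) (hjm : j ≤ m) (hchar : ((2*p^m : ℕ):F) ≠ 0) :
    LinearIndependent F (fun i : Fin (p^(j-1)*(p-1)) =>
      MonoidAlgebra.of F (DihedralGroup (p^m)) ((r 1)^(i:ℕ)) * e1 F p m j) := by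
  have hm : 1 ≤ m := le_trans hj hjm
  obtain ⟨h2, hpF⟩ := char2 hm hchar
  have hu : ((2*p^(m-j) : ℕ):F) ≠ 0 := charC hm hchar _
  have hw : ((2*p^(m-(j-1)) : ℕ):F) ≠ 0 := charC hm hchar _
  set u : F := ((2*p^(m-j) : ℕ):F)⁻¹ with hu'
  set w : F := ((2*p^(m-(j-1)) : ℕ):F)⁻¹ with hw'
  have hune : u ≠ 0 := inv_ne_zero hu
  have hwne : w ≠ 0 := inv_ne_zero hw
  have hp1 : 1 ≤ p := hp.pos
  set cc := p^(j-1) with hcc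
  have hmul1 : cc * (p-1) + cc = cc * p := by
    have hq : p - 1 + 1 = p := by omega
    calc cc * (p-1) + cc = cc * ((p-1)+1) := by ring
      _ = cc * p := by rw [hq]
  have hpj : p^j = cc * p := by rw [hcc, ← pow_succ, Nat.sub_add_cancel hj]
  have hφ : cc*(p-1) ≤ p^j := by omega
  rw [Fintype.linearIndependent_iff]
  intro c hsum i₀
  have hEk : ∀ k : ℕ, k < p^j →
      ∑ i : Fin (cc*(p-1)), c i * ((if k = (i:ℕ) then u else 0)
        - (if k % cc = (i:ℕ) % cc then w else 0)) = 0 := by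
    intro k hk
    have hev := congrArg
      (fun β : MonoidAlgebra F (DihedralGroup (p^m)) => β.coeff (r (k : ZMod (p^m)))) hsum
    simp only [MonoidAlgebra.coeff_zero, Finsupp.coe_zero, Pi.zero_apply] at hev
    rw [MonoidAlgebra.coeff_sum, Finsupp.finset_sum_apply] at hev
    have hterm : ∀ i : Fin (cc*(p-1)),
        (c i • (MonoidAlgebra.of F (DihedralGroup (p^m)) ((r 1)^(i:ℕ)) * e1 F p m j)).coeff
            (r (k : ZMod (p^m)))
          = c i * ((if k = (i:ℕ) then u else 0) - (if k % cc = (i:ℕ) % cc then w else 0)) := by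
      intro i
      rw [MonoidAlgebra.coeff_smul_apply, smul_eq_mul,
        coeff_v hp hjm (lt_of_lt_of_le i.isLt hφ) hk, mul_sub]
    rw [Finset.sum_congr rfl (fun i _ => hterm i)] at hev
    exact hev
  have hsz : ∀ s₀ : ℕ, s₀ < cc →
      ∑ i ∈ Finset.univ.filter (fun i : Fin (cc*(p-1)) => s₀ = (i:ℕ) % cc), c i = 0 := by
    intro s₀ hs₀
    set k₁ := s₀ + cc*(p-1) with hk₁
    have hk₁mod : k₁ % cc = s₀ := by
      rw [hk₁, Nat.add_mul_mod_self_left, Nat.mod_eq_of_lt hs₀]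
    have hk₁lt : k₁ < p^j := by omega
    have hE := hEk k₁ hk₁lt
    have hstep : ∀ i : Fin (cc*(p-1)),
        c i * ((if k₁ = (i:ℕ) then u else 0) - (if k₁ % cc = (i:ℕ) % cc then w else 0))
          = if s₀ = (i:ℕ) % cc then (-w) * c i else 0 := by
      intro i
      have hne : k₁ ≠ (i:ℕ) := by
        have := i.isLt
        omega
      rw [if_neg hne, hk₁mod]
      split_ifs <;> ring
    rw [Finset.sum_congr rfl (fun i _ => hstep i), ← Finset.sum_filter, ← Finset.mul_sum] at hE
    rcases mul_eq_zero.mp hE with h | h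
    · exact absurd h (neg_ne_zero.mpr hwne)
    · exact h
  have hi₀lt : (i₀:ℕ) < p^j := lt_of_lt_of_le i₀.isLt hφ
  have hE := hEk (i₀:ℕ) hi₀lt
  have hsplit : ∀ i : Fin (cc*(p-1)),
      c i * ((if (i₀:ℕ) = (i:ℕ) then u else 0) - (if (i₀:ℕ) % cc = (i:ℕ) % cc then w else 0))
        = (if i₀ = i then c i * u else 0)
          - (if (i₀:ℕ) % cc = (i:ℕ) % cc then w * c i else 0) := by
    intro i
    have hval : ((i₀:ℕ) = (i:ℕ)) ↔ i₀ = i := by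
      constructor
      · intro h; exact Fin.ext h
      · intro h; rw [h]
    rw [if_congr hval rfl rfl]
    split_ifs <;> ring
  rw [Finset.sum_congr rfl (fun i _ => hsplit i), Finset.sum_sub_distrib] at hE
  rw [Finset.sum_ite_eq Finset.univ i₀ (fun i => c i * u)] at hE
  simp only [Finset.mem_univ, if_true] at hE
  rw [← Finset.sum_filter, ← Finset.mul_sum, hsz ((i₀:ℕ) % cc) (Nat.mod_lt _ (pow_pos hp.pos (j-1))),
    mul_zero, sub_zero] at hE
  rcases mul_eq_zero.mp hE with h | h
  · exact h
  · exact absurd h hune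

lemma finrank_e1 (hp : p.Prime) (hj : 1 ≤ j) (hjm : j ≤ m) (hchar : ((2*p^m : ℕ):F) ≠ 0) :
    Module.finrank F (Submodule.restrictScalars F (Ideal.span {e1 F p m j}))
      = p^(j-1)*(p-1) := by
  obtain ⟨h2, hpF⟩ := char2 (le_trans hj hjm) hchar
  rw [span_eq hp hj hjm hpF, finrank_span_eq_card (indep hp hj hjm hchar), Fintype.card_fin]

end Indep

section Weight
variable {F : Type*} [Field F] {p m j : ℕ} [NeZero (p^m)]

lemma card_filter_shift {n : ℕ} [NeZero n] (P : ZMod n → Prop) (c : ZMod n) :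
    (Finset.univ.filter fun i => P (i + c)).card = (Finset.univ.filter P).card := by
  apply Finset.card_bij' (fun i _ => i + c) (fun y _ => y - c) <;>
    intro x hx <;>
    simp_all only [Finset.mem_filter, Finset.mem_univ, true_and, sub_add_cancel,
      add_sub_cancel_right]

lemma card_filter_neg {n : ℕ} [NeZero n] (P : ZMod n → Prop) :
    (Finset.univ.filter fun i => P (-i)).card = (Finset.univ.filter P).card := by
  apply Finset.card_bij' (fun i _ => -i) (fun y _ => -y) <;>
    intro x hx <;>
    simp_all only [Finset.mem_filter, Finset.mem_univ, true_and, neg_neg]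

lemma r_injective {n : ℕ} : Function.Injective (r : ZMod n → DihedralGroup n) := by
  intro a b h
  injection h

lemma sr_injective {n : ℕ} : Function.Injective (sr : ZMod n → DihedralGroup n) := by
  intro a b h
  injection h

lemma wt_eq {n : ℕ} [NeZero n] (α : MonoidAlgebra F (DihedralGroup n)) :
    wt α = (Finset.univ.filter fun i => α.coeff (r i) ≠ 0).card
      + (Finset.univ.filter fun i => α.coeff (sr i) ≠ 0).card := by
  rw [wt]
  have hsupp : α.coeff.support
      = ((Finset.univ.filter fun i => α.coeff (r i) ≠ 0).image r)
        ∪ ((Finset.univ.filter fun i => α.coeff (sr i) ≠ 0).image sr) := by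
    ext x
    cases x with
    | r i =>
        simp only [Finsupp.mem_support_iff, Finset.mem_union, Finset.mem_image,
          Finset.mem_filter, Finset.mem_univ, true_and]
        constructor
        · intro h
          exact Or.inl ⟨i, h, rfl⟩
        · rintro (⟨a, ha, hae⟩ | ⟨a, ha, hae⟩)
          · injection hae with h'
            rwa [← h']
          · exact absurd hae (by simp)
    | sr i =>
        simp only [Finsupp.mem_support_iff, Finset.mem_union, Finset.mem_image,
          Finset.mem_filter, Finset.mem_univ, true_and]
        constructor
        · intro h
          exact Or.inr ⟨i, h, rfl⟩
        · rintro (⟨a, ha, hae⟩ | ⟨a, ha, hae⟩)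
          · exact absurd hae (by simp)
          · injection hae with h'
            rwa [← h']
  rw [hsupp, Finset.card_union_of_disjoint, Finset.card_image_of_injective _ r_injective,
    Finset.card_image_of_injective _ sr_injective]
  rw [Finset.disjoint_left]
  rintro x hx hy
  rcases Finset.mem_image.mp hx with ⟨a, _, rfl⟩
  rcases Finset.mem_image.mp hy with ⟨b, _, hb⟩
  exact absurd hb (by simp)

lemma c_not_in_Kj (hp : p.Prime) (hj : 1 ≤ j) (hjm : j ≤ m) :
    ((p^(j-1) : ℕ) : ZMod (p^m)) ∉ K p m j := by
  intro h
  have h2 : (((p^(j-1) : ℕ) : ℤ) : ZMod (p^m)) ∈ K p m j := by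
    rwa [Int.cast_natCast]
  rw [memK_int hjm] at h2
  have hpos : (0:ℤ) < ((p^(j-1) : ℕ) : ℤ) := by
    have := pow_pos hp.pos (j-1)
    exact_mod_cast this
  have hle := Int.le_of_dvd hpos h2
  have hlt : ((p^(j-1):ℕ):ℤ) < (p:ℤ)^j := by
    push_cast
    exact_mod_cast pow_lt_pow_right₀ hp.one_lt (by omega)
  omega

end Weight

section Alpha0
variable {F : Type*} [Field F] {p m j : ℕ} [NeZero (p^m)]

lemma g_mem_Kj1 (hjm : j ≤ m) :
    (r 1 : DihedralGroup (p^m))^(p^(j-1)) ∈ dih (K p m (j-1)) := by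
  have h := pow_mem_dih (p := p) (m := m) (j-1) 1 (le_trans (Nat.sub_le j 1) hjm)
  rwa [mul_one] at h

lemma alpha0_eq (hjm : j ≤ m) :
    e1 F p m j - MonoidAlgebra.of F (DihedralGroup (p^m)) ((r 1)^(p^(j-1))) * e1 F p m j
      = hat F (dih (K p m j))
        - MonoidAlgebra.of F (DihedralGroup (p^m)) ((r 1)^(p^(j-1)))
            * hat F (dih (K p m j)) := by
  rw [e1, mul_sub, of_mul_hat _ (g_mem_Kj1 hjm)]
  abel

lemma alpha0_apply_r (hp : p.Prime) (hjm : j ≤ m) (i : ZMod (p^m)) :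
    (hat F (dih (K p m j))
        - MonoidAlgebra.of F (DihedralGroup (p^m)) ((r 1)^(p^(j-1)))
            * hat F (dih (K p m j))).coeff (r i)
      = ((2*p^(m-j) : ℕ):F)⁻¹ * ((if i ∈ K p m j then 1 else 0)
          - (if i - ((p^(j-1) : ℕ) : ZMod (p^m)) ∈ K p m j then 1 else 0)) := by
  rw [MonoidAlgebra.coeff_sub, Finsupp.sub_apply, of_mul_apply, r_one_pow, rpow_inv, r_mul_r, neg_add_eq_sub,
    hatD_apply hp hjm, hatD_apply hp hjm, toZ_r, toZ_r, mul_sub]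

lemma alpha0_apply_sr (hp : p.Prime) (hjm : j ≤ m) (i : ZMod (p^m)) :
    (hat F (dih (K p m j))
        - MonoidAlgebra.of F (DihedralGroup (p^m)) ((r 1)^(p^(j-1)))
            * hat F (dih (K p m j))).coeff (sr i)
      = ((2*p^(m-j) : ℕ):F)⁻¹ * ((if i ∈ K p m j then 1 else 0)
          - (if i + ((p^(j-1) : ℕ) : ZMod (p^m)) ∈ K p m j then 1 else 0)) := by
  rw [MonoidAlgebra.coeff_sub, Finsupp.sub_apply, of_mul_apply, r_one_pow, rpow_inv, r_mul_sr, sub_neg_eq_add,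
    hatD_apply hp hjm, hatD_apply hp hjm, toZ_sr, toZ_sr, mul_sub]

lemma excl_sub (hp : p.Prime) (hj : 1 ≤ j) (hjm : j ≤ m) (i : ZMod (p^m)) :
    ¬ (i ∈ K p m j ∧ i - ((p^(j-1) : ℕ) : ZMod (p^m)) ∈ K p m j) := by
  rintro ⟨h1, h2⟩
  apply c_not_in_Kj hp hj hjm
  have := (K p m j).sub_mem h1 h2
  rwa [sub_sub_cancel] at this

lemma excl_add (hp : p.Prime) (hj : 1 ≤ j) (hjm : j ≤ m) (i : ZMod (p^m)) :
    ¬ (i ∈ K p m j ∧ i + ((p^(j-1) : ℕ) : ZMod (p^m)) ∈ K p m j) := by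
  rintro ⟨h1, h2⟩
  apply c_not_in_Kj hp hj hjm
  have := (K p m j).sub_mem h2 h1
  rwa [add_sub_cancel_left] at this

lemma ne_iff_aux {u x y : F} (hu : u ≠ 0) (hxy : ¬ (x = 1 ∧ y = 1))
    (hx : x = 0 ∨ x = 1) (hy : y = 0 ∨ y = 1) :
    u * (x - y) ≠ 0 ↔ (x = 1 ∨ y = 1) := by
  rcases hx with rfl | rfl <;> rcases hy with rfl | rfl <;> simp_all

lemma alpha0_ne_r (hp : p.Prime) (hj : 1 ≤ j) (hjm : j ≤ m)
    (hu : ((2*p^(m-j) : ℕ):F) ≠ 0) (i : ZMod (p^m)) :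
    ((hat F (dih (K p m j))
        - MonoidAlgebra.of F (DihedralGroup (p^m)) ((r 1)^(p^(j-1)))
            * hat F (dih (K p m j))).coeff (r i) ≠ 0)
      ↔ (i ∈ K p m j ∨ i - ((p^(j-1) : ℕ) : ZMod (p^m)) ∈ K p m j) := by
  rw [alpha0_apply_r hp hjm]
  have h1 := excl_sub hp hj hjm i
  by_cases hA : i ∈ K p m j <;>
    by_cases hB : i - ((p^(j-1) : ℕ) : ZMod (p^m)) ∈ K p m j
  · exact absurd ⟨hA, hB⟩ h1
  · rw [if_pos hA, if_neg hB, sub_zero, mul_one]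
    simp only [hA, true_or, iff_true]
    exact inv_ne_zero hu
  · rw [if_neg hA, if_pos hB, zero_sub, mul_neg, mul_one, neg_ne_zero]
    simp only [hB, or_true, iff_true]
    exact inv_ne_zero hu
  · rw [if_neg hA, if_neg hB, sub_zero, mul_zero]
    exact iff_of_false (by simp) (by tauto)

lemma alpha0_ne_sr (hp : p.Prime) (hj : 1 ≤ j) (hjm : j ≤ m)
    (hu : ((2*p^(m-j) : ℕ):F) ≠ 0) (i : ZMod (p^m)) :
    ((hat F (dih (K p m j))
        - MonoidAlgebra.of F (DihedralGroup (p^m)) ((r 1)^(p^(j-1)))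
            * hat F (dih (K p m j))).coeff (sr i) ≠ 0)
      ↔ (i ∈ K p m j ∨ i + ((p^(j-1) : ℕ) : ZMod (p^m)) ∈ K p m j) := by
  rw [alpha0_apply_sr hp hjm]
  have h1 := excl_add hp hj hjm i
  by_cases hA : i ∈ K p m j <;>
    by_cases hB : i + ((p^(j-1) : ℕ) : ZMod (p^m)) ∈ K p m j
  · exact absurd ⟨hA, hB⟩ h1
  · rw [if_pos hA, if_neg hB, sub_zero, mul_one]
    simp only [hA, true_or, iff_true]
    exact inv_ne_zero hu
  · rw [if_neg hA, if_pos hB, zero_sub, mul_neg, mul_one, neg_ne_zero]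
    simp only [hB, or_true, iff_true]
    exact inv_ne_zero hu
  · rw [if_neg hA, if_neg hB, sub_zero, mul_zero]
    exact iff_of_false (by simp) (by tauto)

lemma card_filter_shift_sub {n : ℕ} [NeZero n] (P : ZMod n → Prop) (c : ZMod n) :
    (Finset.univ.filter fun i => P (i - c)).card = (Finset.univ.filter P).card := by
  simp only [sub_eq_add_neg]
  exact card_filter_shift P (-c)

lemma card_or_sub (hp : p.Prime) (hj : 1 ≤ j) (hjm : j ≤ m) :
    (Finset.univ.filter fun i : ZMod (p^m) =>
        i ∈ K p m j ∨ i - ((p^(j-1) : ℕ) : ZMod (p^m)) ∈ K p m j).card = 2 * p^(m-j) := by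
  rw [Finset.filter_or, Finset.card_union_of_disjoint]
  · rw [card_filter_K hp hjm, card_filter_shift_sub (fun z => z ∈ K p m j), card_filter_K hp hjm]
    omega
  · rw [Finset.disjoint_left]
    intro i hi1 hi2
    rw [Finset.mem_filter] at hi1 hi2
    exact excl_sub hp hj hjm i ⟨hi1.2, hi2.2⟩

lemma card_or_add (hp : p.Prime) (hj : 1 ≤ j) (hjm : j ≤ m) :
    (Finset.univ.filter fun i : ZMod (p^m) =>
        i ∈ K p m j ∨ i + ((p^(j-1) : ℕ) : ZMod (p^m)) ∈ K p m j).card = 2 * p^(m-j) := by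
  rw [Finset.filter_or, Finset.card_union_of_disjoint]
  · rw [card_filter_K hp hjm, card_filter_shift (fun z => z ∈ K p m j), card_filter_K hp hjm]
    omega
  · rw [Finset.disjoint_left]
    intro i hi1 hi2
    rw [Finset.mem_filter] at hi1 hi2
    exact excl_add hp hj hjm i ⟨hi1.2, hi2.2⟩

lemma alpha0_wt (hp : p.Prime) (hj : 1 ≤ j) (hjm : j ≤ m)
    (hu : ((2*p^(m-j) : ℕ):F) ≠ 0) :
    wt (e1 F p m j
        - MonoidAlgebra.of F (DihedralGroup (p^m)) ((r 1)^(p^(j-1))) * e1 F p m j)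
      = 4 * p^(m-j) := by
  rw [alpha0_eq hjm, wt_eq]
  rw [Finset.filter_congr (fun i _ => alpha0_ne_r hp hj hjm hu i),
    Finset.filter_congr (fun i _ => alpha0_ne_sr hp hj hjm hu i),
    card_or_sub hp hj hjm, card_or_add hp hj hjm]
  omega

lemma alpha0_ne_zero (hp : p.Prime) (hj : 1 ≤ j) (hjm : j ≤ m)
    (hu : ((2*p^(m-j) : ℕ):F) ≠ 0) :
    e1 F p m j
      - MonoidAlgebra.of F (DihedralGroup (p^m)) ((r 1)^(p^(j-1))) * e1 F p m j ≠ 0 := by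
  intro h0
  have hw := alpha0_wt hp hj hjm hu
  rw [h0] at hw
  have : wt (0 : MonoidAlgebra F (DihedralGroup (p^m))) = 0 := by
    rw [wt, MonoidAlgebra.coeff_zero, Finsupp.support_zero, Finset.card_empty]
  rw [this] at hw
  have := pow_pos hp.pos (m-j)
  omega

end Alpha0

section Lower
variable {F : Type*} [Field F] {p m j : ℕ} [NeZero (p^m)]

lemma lower_bound (hp : p.Prime) (hj : 1 ≤ j) (hjm : j ≤ m)
    (hchar : ((2*p^m : ℕ):F) ≠ 0)
    (α : MonoidAlgebra F (DihedralGroup (p^m)))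
    (hmem : α ∈ Ideal.span {e1 F p m j}) (hne : α ≠ 0) :
    4 * p^(m-j) ≤ wt α := by
  have hm : 1 ≤ m := le_trans hj hjm
  obtain ⟨h2, hpF⟩ := char2 hm hchar
  rw [Ideal.span, Submodule.mem_span_singleton] at hmem
  obtain ⟨cm, hcm⟩ := hmem
  rw [smul_eq_mul] at hcm
  -- relations
  have hαb : α * MonoidAlgebra.of F (DihedralGroup (p^m)) (sr 0) = α := by
    rw [← hcm, mul_assoc, e1_mul_of_b]
  have hαpow : ∀ s : ℕ,
      α * MonoidAlgebra.of F (DihedralGroup (p^m)) ((r 1)^(p^j * s)) = α := by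
    intro s
    rw [← hcm, mul_assoc, e1_mul_of_apow hj hjm s]
  have hαN : α * Nel F p m j = 0 := by
    have he : e1 F p m j * Nel F p m j = 0 := by
      rw [e1]; exact e1_mul_N hp hj hjm hpF
    rw [← hcm, mul_assoc, he, mul_zero]
  -- coefficient relations
  have hmir : ∀ i : ZMod (p^m), α.coeff (sr i) = α.coeff (r (-i)) := by
    intro i
    conv_lhs => rw [← hαb]
    rw [mul_of_apply]
    congr 1
    show sr i * sr 0 = r (-i)
    rw [sr_mul_sr, zero_sub]
  have hper : ∀ (i : ZMod (p^m)) (s : ℕ),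
      α.coeff (r (i + ((p^j * s : ℕ) : ZMod (p^m)))) = α.coeff (r i) := by
    intro i s
    conv_lhs => rw [← hαpow s]
    rw [mul_of_apply, r_one_pow, rpow_inv, r_mul_r, add_neg_cancel_right]
  have hsum : ∀ i : ZMod (p^m),
      ∑ t ∈ Finset.range p, α.coeff (r (i - ((p^(j-1) * t : ℕ) : ZMod (p^m)))) = 0 := by
    intro i
    have h0 := congrArg (fun β : MonoidAlgebra F (DihedralGroup (p^m)) => β.coeff (r i)) hαN
    simp only [MonoidAlgebra.coeff_zero, Finsupp.coe_zero, Pi.zero_apply] at h0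
    rw [Nel, Finset.mul_sum, MonoidAlgebra.coeff_sum, Finsupp.finset_sum_apply] at h0
    rw [← h0]
    apply Finset.sum_congr rfl
    intro t _
    rw [mul_of_apply, r_one_pow, rpow_inv, r_mul_r, ← sub_eq_add_neg]
  -- S and its card
  set S := Finset.univ.filter (fun i : ZMod (p^m) => α.coeff (r i) ≠ 0) with hS
  have hwt : wt α = S.card + S.card := by
    rw [wt_eq]
    congr 1
    rw [Finset.filter_congr (fun (i : ZMod (p^m)) _ => by rw [hmir i])]
    convert card_filter_neg (fun z => α.coeff (r z) ≠ 0) using 2 <;> congr!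
  -- existence of i₀
  have hex : ∃ i₀ : ZMod (p^m), α.coeff (r i₀) ≠ 0 := by
    by_contra hno
    push_neg at hno
    apply hne
    apply MonoidAlgebra.ext; apply Finsupp.ext
    intro x
    cases x with
    | r i => exact hno i
    | sr i => rw [hmir i]; exact hno (-i)
  obtain ⟨i₀, hi₀⟩ := hex
  set T := (Finset.range p).filter
    (fun t => α.coeff (r (i₀ - ((p^(j-1) * t : ℕ) : ZMod (p^m)))) ≠ 0) with hT
  have h0T : 0 ∈ T := by
    rw [hT, Finset.mem_filter, Finset.mem_range]
    refine ⟨hp.pos, ?_⟩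
    simpa using hi₀
  have ht₁ : ∃ t₁ ∈ T, t₁ ≠ 0 := by
    by_contra hno
    push_neg at hno
    have hzero : ∀ t ∈ Finset.range p, t ≠ 0 →
        α.coeff (r (i₀ - ((p^(j-1) * t : ℕ) : ZMod (p^m)))) = 0 := by
      intro t ht htne
      by_contra hval
      exact htne (hno t (by rw [hT, Finset.mem_filter]; exact ⟨ht, hval⟩))
    have hsingle := Finset.sum_eq_single_of_mem 0 (Finset.mem_range.mpr hp.pos) hzero
    rw [hsum i₀] at hsingle
    apply hi₀
    have hc0 : ((p^(j-1) * 0 : ℕ) : ZMod (p^m)) = 0 := by norm_num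
    rw [hc0, sub_zero] at hsingle
    exact hsingle.symm
  obtain ⟨t₁, ht₁T, ht₁ne⟩ := ht₁
  have hTcard : 2 ≤ T.card := by
    have h1 : 1 < T.card := Finset.one_lt_card.mpr
      ⟨0, h0T, t₁, ht₁T, fun h => ht₁ne h.symm⟩
    omega
  -- the injection
  have hcnez : ((p:ℤ)^(j-1)) ≠ 0 := by
    have := hp.pos
    positivity
  have hmaps : ∀ q ∈ T ×ˢ Finset.range (p^(m-j)),
      (i₀ - ((p^(j-1) * q.1 : ℕ) : ZMod (p^m)) + ((p^j * q.2 : ℕ) : ZMod (p^m))) ∈ S := by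
    rintro ⟨t, sidx⟩ hq
    rw [Finset.mem_product] at hq
    rw [hS, Finset.mem_filter]
    refine ⟨Finset.mem_univ _, ?_⟩
    rw [hper]
    have hqt := hq.1
    rw [hT, Finset.mem_filter] at hqt
    exact hqt.2
  have hinj : Set.InjOn
      (fun q : ℕ × ℕ => i₀ - ((p^(j-1) * q.1 : ℕ) : ZMod (p^m)) + ((p^j * q.2 : ℕ) : ZMod (p^m)))
      (↑(T ×ˢ Finset.range (p^(m-j))) : Set (ℕ × ℕ)) := by
    rintro ⟨t, sidx⟩ hq ⟨t', sidx'⟩ hq' heq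
    rw [Finset.mem_coe, Finset.mem_product] at hq hq'
    have htlt : t < p := Finset.mem_range.mp (Finset.mem_filter.mp (hT ▸ hq.1)).1
    have ht'lt : t' < p := Finset.mem_range.mp (Finset.mem_filter.mp (hT ▸ hq'.1)).1
    have hslt : sidx < p^(m-j) := Finset.mem_range.mp hq.2
    have hs'lt : sidx' < p^(m-j) := Finset.mem_range.mp hq'.2
    simp only at heq
    have hz : ((((p^j * sidx : ℕ) : ℤ) - ((p^(j-1) * t : ℕ) : ℤ)
        - ((p^j * sidx' : ℕ) : ℤ) + ((p^(j-1) * t' : ℕ) : ℤ) : ℤ) : ZMod (p^m)) = 0 := by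
      push_cast
      push_cast at heq
      linear_combination heq
    rw [ZMod.intCast_zmod_eq_zero_iff_dvd] at hz
    have hY : (((p^j * sidx : ℕ) : ℤ) - ((p^(j-1) * t : ℕ) : ℤ)
        - ((p^j * sidx' : ℕ) : ℤ) + ((p^(j-1) * t' : ℕ) : ℤ))
          = (p:ℤ)^(j-1) * ((p:ℤ)*sidx - t - (p:ℤ)*sidx' + t') := by
      push_cast
      rw [show (p:ℤ)^j = (p:ℤ)^(j-1) * p by rw [← pow_succ, Nat.sub_add_cancel hj]]
      ring
    have hpm : ((p^m : ℕ):ℤ) = (p:ℤ)^(j-1) * (p:ℤ)^(m-j+1) := by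
      push_cast
      rw [← pow_add]
      congr 1
      omega
    rw [hY, hpm] at hz
    have hz2 : (p:ℤ)^(m-j+1) ∣ ((p:ℤ)*sidx - t - (p:ℤ)*sidx' + t') :=
      (mul_dvd_mul_iff_left hcnez).mp hz
    have hzp : (p:ℤ) ∣ ((p:ℤ)*sidx - t - (p:ℤ)*sidx' + t') :=
      dvd_trans (dvd_pow_self (p:ℤ) (by omega : m-j+1 ≠ 0)) hz2
    have hdigit : (p:ℤ) ∣ ((t':ℤ) - t) := by
      have hps : (p:ℤ) ∣ ((p:ℤ)*sidx - (p:ℤ)*sidx') := ⟨(sidx:ℤ) - sidx', by ring⟩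
      have := dvd_sub hzp hps
      have he : ((p:ℤ)*sidx - t - (p:ℤ)*sidx' + t') - ((p:ℤ)*sidx - (p:ℤ)*sidx')
          = (t':ℤ) - t := by ring
      rwa [he] at this
    have htt : t' = t := int_dvd_iff_eq hp.pos ht'lt htlt |>.mp (by exact_mod_cast hdigit)
    subst htt
    have hz3 : (p:ℤ) * (p:ℤ)^(m-j) ∣ (p:ℤ) * ((sidx:ℤ) - sidx') := by
      have he : ((p:ℤ)*sidx - t' - (p:ℤ)*sidx' + t') = (p:ℤ) * ((sidx:ℤ) - sidx') := by ring
      rw [he] at hz2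
      rwa [show (m-j+1) = (m-j)+1 by omega, pow_succ, mul_comm ((p:ℤ)^(m-j)) (p:ℤ)] at hz2
    have hz4 : (p:ℤ)^(m-j) ∣ ((sidx:ℤ) - sidx') :=
      (mul_dvd_mul_iff_left (show (p:ℤ) ≠ 0 by exact_mod_cast hp.pos.ne')).mp hz3
    have hss : sidx = sidx' := by
      have := int_dvd_iff_eq (pow_pos hp.pos (m-j)) hslt hs'lt |>.mp (by exact_mod_cast hz4)
      omega
    rw [hss]
  have hcard := Finset.card_le_card_of_injOn _ hmaps hinj
  rw [Finset.card_product, Finset.card_range] at hcard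
  have hgt : 2 * p^(m-j) ≤ T.card * p^(m-j) := Nat.mul_le_mul_right _ hTcard
  have h1 : 2 * p^(m-j) ≤ S.card := le_trans hgt hcard
  omega

end Lower

section Final
variable {F : Type*} [Field F] {p m j : ℕ} [NeZero (p^m)]

lemma final (hp : p.Prime) (hj : 1 ≤ j) (hjm : j ≤ m)
    (hchar : ((2 * p ^ m : ℕ) : F) ≠ 0) :
    ((2 : F)⁻¹ • (1 + MonoidAlgebra.of F (DihedralGroup (p^m)) (sr 0))) *
        (hat F (Subgroup.zpowers ((r 1 : DihedralGroup (p^m)) ^ p ^ j)) -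
          hat F (Subgroup.zpowers ((r 1 : DihedralGroup (p^m)) ^ p ^ (j-1))))
      = hat F (Subgroup.closure {(sr 0 : DihedralGroup (p^m)), (r 1) ^ p ^ j})
        - hat F (Subgroup.closure {(sr 0 : DihedralGroup (p^m)), (r 1) ^ p ^ (j-1)}) ∧
    Module.finrank F (Submodule.restrictScalars F (Ideal.span
        {((2 : F)⁻¹ • (1 + MonoidAlgebra.of F (DihedralGroup (p^m)) (sr 0))) *
          (hat F (Subgroup.zpowers ((r 1 : DihedralGroup (p^m)) ^ p ^ j)) -
            hat F (Subgroup.zpowers ((r 1 : DihedralGroup (p^m)) ^ p ^ (j-1))))}))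
      = (p ^ j).totient ∧
    IsLeast {n : ℕ | ∃ α ∈ Ideal.span
        {((2 : F)⁻¹ • (1 + MonoidAlgebra.of F (DihedralGroup (p^m)) (sr 0))) *
          (hat F (Subgroup.zpowers ((r 1 : DihedralGroup (p^m)) ^ p ^ j)) -
            hat F (Subgroup.zpowers ((r 1 : DihedralGroup (p^m)) ^ p ^ (j-1))))},
        α ≠ 0 ∧ wt α = n} (4 * p ^ (m - j)) := by
  have hm : 1 ≤ m := le_trans hj hjm
  have hj1m : j - 1 ≤ m := le_trans (Nat.sub_le j 1) hjm
  obtain ⟨h2, hpF⟩ := char2 hm hchar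
  have hE : ((2 : F)⁻¹ • (1 + MonoidAlgebra.of F (DihedralGroup (p^m)) (sr 0))) *
        (hat F (Subgroup.zpowers ((r 1 : DihedralGroup (p^m)) ^ p ^ j)) -
          hat F (Subgroup.zpowers ((r 1 : DihedralGroup (p^m)) ^ p ^ (j-1))))
      = e1 F p m j := by
    rw [mul_sub, partA hp hjm h2, partA hp hj1m h2, e1]
  refine ⟨?_, ?_, ?_⟩
  · rw [hE, closure_eq_dih, closure_eq_dih, e1]
  · rw [hE, finrank_e1 hp hj hjm hchar, Nat.totient_prime_pow hp (by omega : 0 < j)]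
  · rw [hE]
    constructor
    · -- membership
      refine ⟨e1 F p m j - MonoidAlgebra.of F (DihedralGroup (p^m)) ((r 1)^(p^(j-1)))
          * e1 F p m j, ?_, ?_, ?_⟩
      · rw [Ideal.span, Submodule.mem_span_singleton]
        refine ⟨1 - MonoidAlgebra.of F (DihedralGroup (p^m)) ((r 1)^(p^(j-1))), ?_⟩
        rw [smul_eq_mul, sub_mul, one_mul]
      · exact alpha0_ne_zero hp hj hjm (charC hm hchar (m-j))
      · exact alpha0_wt hp hj hjm (charC hm hchar (m-j))
    · -- lower bound
      rintro n ⟨α, hmem, hne, rfl⟩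
      exact lower_bound hp hj hjm hchar α hmem hne

end Final
end S6

theorem stmt6 {F : Type*} [Field F] (p m j : ℕ) (hp : p.Prime) (hodd : Odd p)
    (hj : 1 ≤ j) (hjm : j ≤ m) (hchar : ((2 * p ^ m : ℕ) : F) ≠ 0)
    [NeZero (p ^ m)] :
    let D := DihedralGroup (p ^ m)
    let a : D := DihedralGroup.r 1
    let b : D := DihedralGroup.sr 0
    let ej : MonoidAlgebra F D :=
      hat F (Subgroup.zpowers (a ^ p ^ j)) -
        hat F (Subgroup.zpowers (a ^ p ^ (j - 1)))
    let e₁₁ : MonoidAlgebra F D :=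
      ((2 : F)⁻¹ • (1 + MonoidAlgebra.of F D b)) * ej
    e₁₁ = hat F (Subgroup.closure {b, a ^ p ^ j}) -
        hat F (Subgroup.closure {b, a ^ p ^ (j - 1)}) ∧
      Module.finrank F (Submodule.restrictScalars F (Ideal.span {e₁₁})) =
        (p ^ j).totient ∧
      IsLeast {n : ℕ | ∃ α ∈ Ideal.span {e₁₁}, α ≠ 0 ∧ wt α = n}
        (4 * p ^ (m - j)) := by
  exact S6.final hp hj hjm hchar
end

section
/- Let D be the dihedral group of order 2p^m, F a field with char(F) ∤ 2p^m, e = e_j = Ĥ_j − Ĥ_{j−1} for some 1 ≤ j ≤ m. Define e₁₁ = ((1+b)/2)e, e₁₂ = ((1+b)/2)a((1−b)/2)e, e₂₂ = ((1−b)/2)e, and suppose (a − a^{-1})e is invertible in the ring (FD)e with inverse u; set e₂₁ = 4u²((1−b)/2)a((1+b)/2)e. Then e₁₁ + e₂₂ = e and e_{ij}e_{hk} = δ_{jh} e_{ik} for all i,j,h,k ∈ {1,2}. -/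
open scoped Classical

section HatLemmas

variable {F : Type*} [Field F] {G : Type*} [Group G] [Fintype G]

lemma hat_def (S : Subgroup G) :
    hat F S = (Nat.card S : F)⁻¹ • ∑ g : G, if g ∈ S then MonoidAlgebra.of F G g else 0 := rfl

lemma sum_ite_mem_smul (S : Subgroup G) (c : MonoidAlgebra F G) :
    ∑ g : G, (if g ∈ S then c else 0) = (Nat.card S : F) • c := by
  classical
  have h1 : ∑ g : G, (if g ∈ S then c else 0)
      = (Finset.univ.filter (fun g : G => g ∈ S)).card • c := by
    rw [Finset.sum_ite, Finset.sum_const, Finset.sum_const_zero, add_zero]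
  have h2 : (Finset.univ.filter (fun g : G => g ∈ S)).card = Nat.card S := by
    rw [Nat.card_eq_fintype_card, Fintype.card_subtype]
  rw [h1, h2, Nat.cast_smul_eq_nsmul]

lemma of_mul_hat (S : Subgroup G) {g : G} (hg : g ∈ S) :
    MonoidAlgebra.of F G g * hat F S = hat F S := by
  rw [hat_def, mul_smul_comm, Finset.mul_sum]
  congr 1
  refine Fintype.sum_bijective (fun h => g * h) (Group.mulLeft_bijective g) _ _ (fun h => ?_)
  by_cases hh : h ∈ S
  · rw [if_pos hh, if_pos (mul_mem hg hh), ← map_mul]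
  · rw [if_neg hh, if_neg (fun hc => hh (by simpa using mul_mem (inv_mem hg) hc)), mul_zero]

lemma hat_mul_of (S : Subgroup G) {g : G} (hg : g ∈ S) :
    hat F S * MonoidAlgebra.of F G g = hat F S := by
  rw [hat_def, smul_mul_assoc, Finset.sum_mul]
  congr 1
  refine Fintype.sum_bijective (fun h => h * g) (Group.mulRight_bijective g) _ _ (fun h => ?_)
  by_cases hh : h ∈ S
  · rw [if_pos hh, if_pos (mul_mem hh hg), ← map_mul]
  · rw [if_neg hh, if_neg (fun hc => hh (by simpa using mul_mem hc (inv_mem hg))), zero_mul]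

lemma hat_mul_hat {S T : Subgroup G} (hST : S ≤ T) (hS : (Nat.card S : F) ≠ 0) :
    hat F S * hat F T = hat F T := by
  conv_lhs => rw [hat_def S]
  rw [smul_mul_assoc, Finset.sum_mul]
  have h : ∀ g : G, (if g ∈ S then MonoidAlgebra.of F G g else 0) * hat F T
      = if g ∈ S then hat F T else 0 := fun g => by
    by_cases hg : g ∈ S
    · rw [if_pos hg, if_pos hg, of_mul_hat T (hST hg)]
    · rw [if_neg hg, if_neg hg, zero_mul]
  rw [Finset.sum_congr rfl fun g _ => h g, sum_ite_mem_smul, smul_smul,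
    inv_mul_cancel₀ hS, one_smul]

lemma hat_mul_hat' {S T : Subgroup G} (hST : S ≤ T) (hS : (Nat.card S : F) ≠ 0) :
    hat F T * hat F S = hat F T := by
  conv_lhs => rw [hat_def S]
  rw [mul_smul_comm, Finset.mul_sum]
  have h : ∀ g : G, hat F T * (if g ∈ S then MonoidAlgebra.of F G g else 0)
      = if g ∈ S then hat F T else 0 := fun g => by
    by_cases hg : g ∈ S
    · rw [if_pos hg, if_pos hg, hat_mul_of T (hST hg)]
    · rw [if_neg hg, if_neg hg, mul_zero]
  rw [Finset.sum_congr rfl fun g _ => h g, sum_ite_mem_smul, smul_smul,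
    inv_mul_cancel₀ hS, one_smul]

lemma of_comm_hat (x : G) (S : Subgroup G) (hx : ∀ g, g ∈ S ↔ x * g * x⁻¹ ∈ S) :
    MonoidAlgebra.of F G x * hat F S = hat F S * MonoidAlgebra.of F G x := by
  rw [hat_def, mul_smul_comm, smul_mul_assoc, Finset.mul_sum, Finset.sum_mul]
  congr 1
  have hbij : Function.Bijective (fun g : G => x * g * x⁻¹) :=
    ⟨fun g₁ g₂ hh => mul_left_cancel (mul_right_cancel hh),
     fun g => ⟨x⁻¹ * g * x, by group⟩⟩
  refine Fintype.sum_bijective _ hbij _ _ (fun g => ?_)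
  by_cases hg : g ∈ S
  · rw [if_pos hg, if_pos ((hx g).mp hg), ← map_mul, ← map_mul]
    congr 1
    group
  · rw [if_neg hg, if_neg (fun hc => hg ((hx g).mpr hc)), mul_zero, zero_mul]

end HatLemmas

section DihLemmas

open DihedralGroup

variable {n : ℕ}

lemma r_inv' (x : ZMod n) : (r x)⁻¹ = r (-x) := rfl

lemma sr_inv' (x : ZMod n) : (sr x)⁻¹ = sr x := rfl

lemma r_npow' (t : ZMod n) (k : ℕ) : (r t) ^ k = r (k • t) := by
  induction k with
  | zero => rw [pow_zero, zero_smul]; rfl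
  | succ k ih => rw [pow_succ, ih, r_mul_r, succ_nsmul]

lemma r_zpow' (t : ZMod n) (k : ℤ) : (r t) ^ k = r (k • t) := by
  rcases k with k | k
  · rw [Int.ofNat_eq_coe, zpow_natCast, r_npow', natCast_zsmul]
  · rw [zpow_negSucc, r_npow', r_inv', negSucc_zsmul]

lemma sr_not_mem_zpowers_r (t x : ZMod n) : sr x ∉ Subgroup.zpowers (r t) := by
  intro h
  obtain ⟨k, hk⟩ := Subgroup.mem_zpowers_iff.mp h
  rw [r_zpow'] at hk
  exact nomatch hk

lemma conj_r_mem (t : ZMod n) (g : DihedralGroup n) :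
    g ∈ Subgroup.zpowers (r t) ↔ r 1 * g * (r 1)⁻¹ ∈ Subgroup.zpowers (r t) := by
  cases g with
  | r s =>
      rw [r_inv', r_mul_r, r_mul_r]
      have hs : (1 : ZMod n) + s + -1 = s := by ring
      rw [hs]
  | sr s =>
      refine iff_of_false (sr_not_mem_zpowers_r t s) ?_
      rw [r_inv', r_mul_sr, sr_mul_r]
      exact sr_not_mem_zpowers_r t _

lemma conj_sr_mem (t : ZMod n) (g : DihedralGroup n) :
    g ∈ Subgroup.zpowers (r t) ↔ sr 0 * g * (sr 0)⁻¹ ∈ Subgroup.zpowers (r t) := by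
  cases g with
  | r s =>
      rw [sr_inv', sr_mul_r, sr_mul_sr]
      have hs : (0 : ZMod n) - (0 + s) = -s := by ring
      rw [hs, ← r_inv']
      exact (inv_mem_iff).symm
  | sr s =>
      refine iff_of_false (sr_not_mem_zpowers_r t s) ?_
      rw [sr_inv', sr_mul_sr, r_mul_sr]
      exact sr_not_mem_zpowers_r t _

end DihLemmas

set_option maxHeartbeats 1000000 in
theorem units_aux {F A : Type*} [Field F] [Ring A] [Algebra F A]
    (a b c e u E11 E12 E21 E22 : A) (h2 : (2 : F) ≠ 0)
    (hac : a * c = 1) (hca : c * a = 1) (hbb : b * b = 1)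
    (hba : b * a = c * b) (hbc : b * c = a * b)
    (hee : e * e = e) (hea : e * a = a * e) (heb : e * b = b * e) (hec : e * c = c * e)
    (hue : u * e = u) (hwu : ((a - c) * e) * u = e) (huw : u * ((a - c) * e) = e)
    (hE11 : E11 = ((2 : F)⁻¹ • (1 + b)) * e)
    (hE12 : E12 = ((2 : F)⁻¹ • (1 + b)) * a * ((2 : F)⁻¹ • (1 - b)) * e)
    (hE22 : E22 = ((2 : F)⁻¹ • (1 - b)) * e)
    (hE21 : E21 = (4 : F) • (u * u) * (((2 : F)⁻¹ • (1 - b)) * a *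
        (((2 : F)⁻¹ • (1 + b)) * e))) :
    (E11 + E22 = e) ∧
    (E11 * E11 = E11) ∧ (E11 * E12 = E12) ∧ (E11 * E21 = 0) ∧ (E11 * E22 = 0) ∧
    (E12 * E11 = 0) ∧ (E12 * E12 = 0) ∧ (E12 * E21 = E11) ∧ (E12 * E22 = E12) ∧
    (E21 * E11 = E21) ∧ (E21 * E12 = E22) ∧ (E21 * E21 = 0) ∧ (E21 * E22 = 0) ∧
    (E22 * E11 = 0) ∧ (E22 * E12 = 0) ∧ (E22 * E21 = E21) ∧ (E22 * E22 = E22) := by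
  obtain ⟨w, hwdef⟩ : ∃ w', w' = (a - c) * e := ⟨_, rfl⟩
  obtain ⟨f, hfdef⟩ : ∃ f', f' = (2 : F)⁻¹ • (1 + b) := ⟨_, rfl⟩
  obtain ⟨g, hgdef⟩ : ∃ g', g' = (2 : F)⁻¹ • (1 - b) := ⟨_, rfl⟩
  rw [← hwdef] at hwu huw
  rw [← hfdef] at hE11 hE12 hE21
  rw [← hgdef] at hE12 hE21 hE22
  -- u facts
  have heu : e * u = u := by
    calc e * u = (u * w) * u := by rw [huw]
    _ = u * (w * u) := by rw [mul_assoc]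
    _ = u * e := by rw [hwu]
    _ = u := hue
  have heac : e * (a - c) = (a - c) * e := by rw [mul_sub, sub_mul, hea, hec]
  have hew : e * w = w := by
    rw [hwdef, ← mul_assoc, heac, mul_assoc, hee]
  have haac : a * (a - c) = (a - c) * a := by rw [mul_sub, sub_mul, hac, hca]
  have haw : a * w = w * a := by
    rw [hwdef, ← mul_assoc, haac, mul_assoc, ← hea, ← mul_assoc]
  have hau : a * u = u * a := by
    calc a * u = a * (e * u) := by rw [heu]
    _ = (a * e) * u := by rw [mul_assoc]
    _ = (e * a) * u := by rw [hea]
    _ = ((u * w) * a) * u := by rw [huw]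
    _ = (u * (w * a)) * u := by rw [mul_assoc u w a]
    _ = (u * (a * w)) * u := by rw [haw]
    _ = ((u * a) * w) * u := by rw [← mul_assoc]
    _ = (u * a) * (w * u) := by rw [mul_assoc]
    _ = (u * a) * e := by rw [hwu]
    _ = u * (a * e) := by rw [mul_assoc]
    _ = u * (e * a) := by rw [hea]
    _ = (u * e) * a := by rw [← mul_assoc]
    _ = u * a := by rw [hue]
  have hbac : b * (a - c) = -((a - c) * b) := by
    rw [mul_sub, sub_mul, hba, hbc]
    abel
  have hbw : b * w = -(w * b) := by
    rw [hwdef, ← mul_assoc, hbac, neg_mul, mul_assoc, ← heb, ← mul_assoc]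
  have step1 : (b * u * b) * w = -e := by
    calc (b * u * b) * w = (b * u) * (b * w) := by rw [mul_assoc]
    _ = (b * u) * (-(w * b)) := by rw [hbw]
    _ = -(((b * u) * w) * b) := by rw [mul_neg, ← mul_assoc]
    _ = -((b * (u * w)) * b) := by rw [mul_assoc b u w]
    _ = -((b * e) * b) := by rw [huw]
    _ = -((e * b) * b) := by rw [heb]
    _ = -(e * (b * b)) := by rw [mul_assoc]
    _ = -e := by rw [hbb, mul_one]
  have step2 : b * u * b = -u := by
    calc b * u * b = (b * (u * e)) * b := by rw [hue]
    _ = ((b * u) * e) * b := by rw [← mul_assoc]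
    _ = (b * u) * (e * b) := by rw [mul_assoc]
    _ = (b * u) * (b * e) := by rw [heb]
    _ = ((b * u) * b) * e := by rw [← mul_assoc]
    _ = ((b * u) * b) * (w * u) := by rw [hwu]
    _ = (((b * u) * b) * w) * u := by rw [← mul_assoc]
    _ = (-e) * u := by rw [step1]
    _ = -u := by rw [neg_mul, heu]
  have hbu : b * u = -(u * b) := by
    calc b * u = (b * u) * (b * b) := by rw [hbb, mul_one]
    _ = ((b * u) * b) * b := by rw [← mul_assoc]
    _ = (-u) * b := by rw [step2]
    _ = -(u * b) := by rw [neg_mul]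
  have hbuu : b * (u * u) = (u * u) * b := by
    calc b * (u * u) = (b * u) * u := by rw [← mul_assoc]
    _ = (-(u * b)) * u := by rw [hbu]
    _ = -(u * (b * u)) := by rw [neg_mul, mul_assoc]
    _ = -(u * (-(u * b))) := by rw [hbu]
    _ = u * (u * b) := by rw [mul_neg, neg_neg]
    _ = (u * u) * b := by rw [← mul_assoc]
  -- f and g facts
  have hfg1 : f + g = 1 := by
    rw [hfdef, hgdef, ← smul_add]
    have h21 : ((1 : A) + b) + (1 - b) = (2 : F) • 1 := by
      rw [two_smul]; abel
    rw [h21, smul_smul, inv_mul_cancel₀ h2, one_smul]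
  have hbf : b * f = f := by
    rw [hfdef, mul_smul_comm, mul_add, mul_one, hbb, add_comm]
  have hbg : b * g = -g := by
    rw [hgdef, mul_smul_comm, mul_sub, mul_one, hbb, ← smul_neg]
    congr 1
    abel
  have hfb : f * b = f := by
    rw [hfdef, smul_mul_assoc, add_mul, one_mul, hbb, add_comm]
  have hgb : g * b = -g := by
    rw [hgdef, smul_mul_assoc, sub_mul, one_mul, hbb, ← smul_neg]
    congr 1
    abel
  have Lf : ∀ t, f * t = (2 : F)⁻¹ • (t + b * t) := fun t => by
    rw [hfdef, smul_mul_assoc, add_mul, one_mul]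
  have Lg : ∀ t, g * t = (2 : F)⁻¹ • (t - b * t) := fun t => by
    rw [hgdef, smul_mul_assoc, sub_mul, one_mul]
  have Rf : ∀ t, t * f = (2 : F)⁻¹ • (t + t * b) := fun t => by
    rw [hfdef, mul_smul_comm, mul_add, mul_one]
  have Rg : ∀ t, t * g = (2 : F)⁻¹ • (t - t * b) := fun t => by
    rw [hgdef, mul_smul_comm, mul_sub, mul_one]
  have hff : f * f = f := by
    rw [Lf f, hbf, ← two_smul F f, smul_smul, inv_mul_cancel₀ h2, one_smul]
  have hgg : g * g = g := by
    rw [Lg g, hbg, sub_neg_eq_add, ← two_smul F g, smul_smul, inv_mul_cancel₀ h2, one_smul]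
  have hfg0 : f * g = 0 := by
    rw [Lf g, hbg, add_neg_cancel, smul_zero]
  have hgf0 : g * f = 0 := by
    rw [Lg f, hbf, sub_self, smul_zero]
  have hef : e * f = f * e := by
    rw [Rf e, Lf e, heb]
  have heg : e * g = g * e := by
    rw [Rg e, Lg e, heb]
  have hfuu : f * (u * u) = (u * u) * f := by
    rw [Lf (u * u), Rf (u * u), hbuu]
  have hguu : g * (u * u) = (u * u) * g := by
    rw [Lg (u * u), Rg (u * u), hbuu]
  -- parametric rewriting lemmas
  have L_ef : ∀ t, e * (f * t) = f * (e * t) := fun t => by rw [← mul_assoc, hef, mul_assoc]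
  have L_eg : ∀ t, e * (g * t) = g * (e * t) := fun t => by rw [← mul_assoc, heg, mul_assoc]
  have L_ea : ∀ t, e * (a * t) = a * (e * t) := fun t => by rw [← mul_assoc, hea, mul_assoc]
  have L_eu : ∀ t, e * (u * t) = u * t := fun t => by rw [← mul_assoc, heu]
  have L_ff : ∀ t, f * (f * t) = f * t := fun t => by rw [← mul_assoc, hff]
  have L_gg : ∀ t, g * (g * t) = g * t := fun t => by rw [← mul_assoc, hgg]
  have L_fg : ∀ t, f * (g * t) = 0 := fun t => by rw [← mul_assoc, hfg0, zero_mul]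
  have L_gf : ∀ t, g * (f * t) = 0 := fun t => by rw [← mul_assoc, hgf0, zero_mul]
  have huua : (u * u) * a = a * (u * u) := by
    rw [mul_assoc, ← hau, ← mul_assoc, ← hau, mul_assoc]
  have L_fuu : ∀ t, f * (u * (u * t)) = u * (u * (f * t)) := fun t => by
    rw [← mul_assoc u u t, ← mul_assoc f (u * u) t, hfuu, mul_assoc, mul_assoc]
  have L_guu : ∀ t, g * (u * (u * t)) = u * (u * (g * t)) := fun t => by
    rw [← mul_assoc u u t, ← mul_assoc g (u * u) t, hguu, mul_assoc, mul_assoc]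
  have L_auu : ∀ t, a * (u * (u * t)) = u * (u * (a * t)) := fun t => by
    rw [← mul_assoc u u t, ← mul_assoc a (u * u) t, ← huua, mul_assoc, mul_assoc]
  -- the key inverse identity
  have hww : w * w = (a - c) * ((a - c) * e) := by
    calc w * w = ((a - c) * e) * w := by rw [hwdef]
    _ = (a - c) * (e * w) := by rw [mul_assoc]
    _ = (a - c) * w := by rw [hew]
    _ = (a - c) * ((a - c) * e) := by rw [hwdef]
  have hKbase : u * (u * ((a - c) * ((a - c) * e))) = e := by
    rw [← hww]
    calc u * (u * (w * w)) = u * ((u * w) * w) := by rw [← mul_assoc u w w]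
    _ = u * (e * w) := by rw [huw]
    _ = u * w := by rw [hew]
    _ = e := huw
  have Kinv : ∀ t, u * (u * ((a - c) * ((a - c) * (e * t)))) = e * t := fun t => by
    have h0 := congrArg (· * t) hKbase
    simp only [mul_assoc] at h0
    exact h0
  -- key sandwich identities
  have haga : a * (g * a) = (2 : F)⁻¹ • (a * a - b) := by
    rw [hgdef, smul_mul_assoc, mul_smul_comm, sub_mul, one_mul, mul_sub, hba,
      ← mul_assoc, hac, one_mul]
  have hafa : a * (f * a) = (2 : F)⁻¹ • (a * a + b) := by
    rw [hfdef, smul_mul_assoc, mul_smul_comm, add_mul, one_mul, mul_add, hba,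
      ← mul_assoc, hac, one_mul]
  have hbaa : b * (a * a) = (c * c) * b := by
    rw [← mul_assoc, hba, mul_assoc, hba, ← mul_assoc]
  have hfaaf : f * ((a * a) * f) = (2 : F)⁻¹ • ((a * a + c * c) * f) := by
    rw [Lf ((a * a) * f), ← mul_assoc b (a * a) f, hbaa, mul_assoc (c * c) b f, hbf,
      ← add_mul]
  have hgaag : g * ((a * a) * g) = (2 : F)⁻¹ • ((a * a + c * c) * g) := by
    rw [Lg ((a * a) * g), ← mul_assoc b (a * a) g, hbaa, mul_assoc (c * c) b g, hbg,
      mul_neg, sub_neg_eq_add, ← add_mul]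
  have hacac : (a - c) * (a - c) = a * a + c * c - (1 + 1) := by
    have hexp : (a - c) * (a - c) = a * a - a * c - c * a + c * c := by noncomm_ring
    rw [hexp, hac, hca]
    abel
  have e1 : (2 : F)⁻¹ * 2⁻¹ = 4⁻¹ := by
    rw [← mul_inv]
    norm_num
  have e2 : (4 : F)⁻¹ * 2 = 2⁻¹ := by
    rw [show (4 : F) = 2 * 2 by norm_num, mul_inv, mul_assoc, inv_mul_cancel₀ h2, mul_one]
  have h4 : (4 : F) ≠ 0 := by
    intro hx
    rw [show (4 : F) = 2 * 2 by norm_num] at hx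
    rcases mul_eq_zero.mp hx with h' | h' <;> exact h2 h'
  have key1b : f * (a * (g * (a * f))) = (4 : F)⁻¹ • ((a - c) * ((a - c) * f)) := by
    have h1 : a * (g * (a * f)) = (a * (g * a)) * f := by rw [mul_assoc, mul_assoc]
    have h11 : ((1 : A) + 1) * f = f + f := by rw [add_mul, one_mul]
    rw [h1, haga, smul_mul_assoc, mul_smul_comm, sub_mul (a * a) b f, hbf,
      mul_sub f ((a * a) * f) f, hff, hfaaf,
      ← mul_assoc (a - c) (a - c) f, hacac, sub_mul (a * a + c * c) (1 + 1) f, h11,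
      smul_sub ((2 : F)⁻¹), smul_smul, e1, smul_sub ((4 : F)⁻¹), ← two_smul F f,
      smul_smul, e2]
  have key2b : g * (a * (f * (a * g))) = (4 : F)⁻¹ • ((a - c) * ((a - c) * g)) := by
    have h1 : a * (f * (a * g)) = (a * (f * a)) * g := by rw [mul_assoc, mul_assoc]
    have h11 : ((1 : A) + 1) * g = g + g := by rw [add_mul, one_mul]
    rw [h1, hafa, smul_mul_assoc, mul_smul_comm, add_mul (a * a) b g, hbg,
      mul_add g ((a * a) * g) (-g), hgaag, mul_neg g g, hgg, ← sub_eq_add_neg,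
      ← mul_assoc (a - c) (a - c) g, hacac, sub_mul (a * a + c * c) (1 + 1) g, h11,
      smul_sub ((2 : F)⁻¹), smul_smul, e1, smul_sub ((4 : F)⁻¹), ← two_smul F g,
      smul_smul, e2]
  have K1 : ∀ t, f * (a * (g * (a * (f * t)))) = (4 : F)⁻¹ • ((a - c) * ((a - c) * (f * t))) :=
    fun t => by
      have h0 := congrArg (· * t) key1b
      simp only [mul_assoc, smul_mul_assoc] at h0
      exact h0
  have K2 : ∀ t, g * (a * (f * (a * (g * t)))) = (4 : F)⁻¹ • ((a - c) * ((a - c) * (g * t))) :=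
    fun t => by
      have h0 := congrArg (· * t) key2b
      simp only [mul_assoc, smul_mul_assoc] at h0
      exact h0
  refine ⟨?_, ?_, ?_, ?_, ?_, ?_, ?_, ?_, ?_, ?_, ?_, ?_, ?_, ?_, ?_, ?_, ?_⟩
  · rw [hE11, hE22, ← add_mul, hfg1, one_mul]
  · rw [hE11]
    simp only [mul_assoc]
    rw [L_ef, L_ff, hee]
  · rw [hE11, hE12]
    simp only [mul_assoc]
    rw [L_ef, L_ff, L_ea, L_eg, hee]
  · rw [hE11, hE21]
    simp only [mul_assoc, smul_mul_assoc, mul_smul_comm]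
    rw [L_eu, L_fuu, L_fg]
    simp only [mul_zero, smul_zero]
  · rw [hE11, hE22]
    simp only [mul_assoc]
    rw [L_eg, L_fg]
  · rw [hE12, hE11]
    simp only [mul_assoc]
    rw [L_ef, L_gf]
    simp only [mul_zero]
  · rw [hE12]
    simp only [mul_assoc]
    rw [L_ef, L_gf]
    simp only [mul_zero]
  · rw [hE12, hE21, hE11]
    simp only [mul_assoc, smul_mul_assoc, mul_smul_comm]
    rw [L_eu, L_guu, L_auu, L_fuu, L_gg, K1]
    simp only [mul_smul_comm, smul_smul]
    rw [mul_inv_cancel₀ h4, one_smul, ← hef, Kinv]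
  · rw [hE12, hE22]
    simp only [mul_assoc]
    rw [L_eg, L_gg, hee]
  · rw [hE21, hE11]
    simp only [mul_assoc, smul_mul_assoc, mul_smul_comm]
    rw [L_ef, L_ff, hee]
  · rw [hE21, hE12, hE22]
    simp only [mul_assoc, smul_mul_assoc, mul_smul_comm]
    rw [L_ef, L_ff, L_ea, L_eg, hee, K2]
    simp only [mul_smul_comm, smul_smul]
    rw [mul_inv_cancel₀ h4, one_smul, ← heg, Kinv]
  · rw [hE21]
    simp only [mul_assoc, smul_mul_assoc, mul_smul_comm, smul_smul]
    rw [L_eu, L_fuu, L_fg]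
    simp only [mul_zero, smul_zero]
  · rw [hE21, hE22]
    simp only [mul_assoc, smul_mul_assoc, mul_smul_comm]
    rw [L_eg, L_fg]
    simp only [mul_zero, smul_zero]
  · rw [hE22, hE11]
    simp only [mul_assoc]
    rw [L_ef, L_gf]
  · rw [hE22, hE12]
    simp only [mul_assoc]
    rw [L_ef, L_gf]
  · rw [hE22, hE21]
    simp only [mul_assoc, smul_mul_assoc, mul_smul_comm]
    rw [L_eu, L_guu, L_gg]
  · rw [hE22]
    simp only [mul_assoc]
    rw [L_eg, L_gg, hee]


theorem stmt7 {F : Type*} [Field F] (p m j : ℕ) (hp : p.Prime) (hodd : Odd p)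
    (hj : 1 ≤ j) (hjm : j ≤ m) (hchar : ((2 * p ^ m : ℕ) : F) ≠ 0)
    [NeZero (p ^ m)]
    (a b e e₁₁ e₁₂ e₂₁ e₂₂ u : MonoidAlgebra F (DihedralGroup (p ^ m)))
    (ha : a = MonoidAlgebra.of F _ (DihedralGroup.r 1))
    (hb : b = MonoidAlgebra.of F _ (DihedralGroup.sr 0))
    (he : e = hat F (Subgroup.zpowers (DihedralGroup.r 1 ^ p ^ j)) -
        hat F (Subgroup.zpowers (DihedralGroup.r 1 ^ p ^ (j - 1))))
    (he11 : e₁₁ = ((2 : F)⁻¹ • (1 + b)) * e)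
    (he12 : e₁₂ = ((2 : F)⁻¹ • (1 + b)) * a * ((2 : F)⁻¹ • (1 - b)) * e)
    (he22 : e₂₂ = ((2 : F)⁻¹ • (1 - b)) * e)
    -- `u` is the inverse of `(a - a⁻¹)e` in the ring `(FD)e` (with identity `e`)
    (hu : u * e = u ∧ ((a - MonoidAlgebra.of F _ (DihedralGroup.r 1)⁻¹) * e) * u = e ∧
      u * ((a - MonoidAlgebra.of F _ (DihedralGroup.r 1)⁻¹) * e) = e)
    (he21 : e₂₁ = (4 : F) • (u * u) * (((2 : F)⁻¹ • (1 - b)) * a *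
        (((2 : F)⁻¹ • (1 + b)) * e))) :
    e₁₁ + e₂₂ = e ∧
      ∀ i j h k : Fin 2,
        (!![e₁₁, e₁₂; e₂₁, e₂₂]) i j * (!![e₁₁, e₁₂; e₂₁, e₂₂]) h k =
          if j = h then (!![e₁₁, e₁₂; e₂₁, e₂₂]) i k else 0 := by
  classical
  obtain ⟨hue, hwu, huw⟩ := hu
  set c : MonoidAlgebra F (DihedralGroup (p ^ m)) :=
    MonoidAlgebra.of F (DihedralGroup (p ^ m)) (DihedralGroup.r 1)⁻¹ with hcdef
  -- scalar facts
  have h2 : (2 : F) ≠ 0 := by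
    intro h
    apply hchar
    push_cast
    rw [h, zero_mul]
  -- letter relations
  have hac : a * c = 1 := by
    rw [ha, hcdef, ← map_mul, mul_inv_cancel, map_one]
  have hca : c * a = 1 := by
    rw [ha, hcdef, ← map_mul, inv_mul_cancel, map_one]
  have hbb : b * b = 1 := by
    rw [hb, ← map_mul, DihedralGroup.sr_mul_self, map_one]
  have hba : b * a = c * b := by
    rw [ha, hb, hcdef, ← map_mul, ← map_mul]
    congr 1
    rw [r_inv', DihedralGroup.sr_mul_r, DihedralGroup.r_mul_sr]
    congr 1
    ring
  have hbc : b * c = a * b := by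
    rw [ha, hb, hcdef, ← map_mul, ← map_mul]
    congr 1
    rw [r_inv', DihedralGroup.sr_mul_r, DihedralGroup.r_mul_sr]
    congr 1
    ring
  -- e facts
  simp only [DihedralGroup.r_one_pow] at he
  have hcard : ∀ S : Subgroup (DihedralGroup (p ^ m)), (Nat.card S : F) ≠ 0 := by
    intro S hzero
    have hdvd : Nat.card S ∣ Nat.card (DihedralGroup (p ^ m)) :=
      Subgroup.card_subgroup_dvd_card S
    rw [DihedralGroup.nat_card] at hdvd
    obtain ⟨k, hk⟩ := hdvd
    apply hchar
    rw [hk, Nat.cast_mul, hzero, zero_mul]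
  have hle : Subgroup.zpowers (DihedralGroup.r ((p ^ j : ℕ) : ZMod (p ^ m)))
      ≤ Subgroup.zpowers (DihedralGroup.r ((p ^ (j-1) : ℕ) : ZMod (p ^ m))) := by
    rw [Subgroup.zpowers_le]
    have hmem := pow_mem (Subgroup.mem_zpowers
      (DihedralGroup.r ((p ^ (j-1) : ℕ) : ZMod (p ^ m)))) p
    rw [r_npow'] at hmem
    have hsm : p • (((p ^ (j-1) : ℕ) : ZMod (p ^ m))) = ((p ^ j : ℕ) : ZMod (p ^ m)) := by
      rw [nsmul_eq_mul]
      push_cast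
      rw [← pow_succ']
      congr 1
      omega
    rwa [hsm] at hmem
  have hXX := hat_mul_hat (F := F) (le_refl (Subgroup.zpowers
    (DihedralGroup.r ((p ^ j : ℕ) : ZMod (p ^ m))))) (hcard _)
  have hXY := hat_mul_hat (F := F) hle (hcard _)
  have hYX := hat_mul_hat' (F := F) hle (hcard _)
  have hYY := hat_mul_hat (F := F) (le_refl (Subgroup.zpowers
    (DihedralGroup.r ((p ^ (j-1) : ℕ) : ZMod (p ^ m))))) (hcard _)
  have hee : e * e = e := by
    rw [he, sub_mul, mul_sub, mul_sub, hXX, hXY, hYX, hYY]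
    abel
  have hea : e * a = a * e := by
    have c1 := of_comm_hat (F := F) (DihedralGroup.r 1) _
      (fun g => conj_r_mem ((p ^ j : ℕ) : ZMod (p ^ m)) g)
    have c2 := of_comm_hat (F := F) (DihedralGroup.r 1) _
      (fun g => conj_r_mem ((p ^ (j-1) : ℕ) : ZMod (p ^ m)) g)
    rw [he, ha, sub_mul, mul_sub, c1, c2]
  have heb : e * b = b * e := by
    have c1 := of_comm_hat (F := F) (DihedralGroup.sr 0) _
      (fun g => conj_sr_mem ((p ^ j : ℕ) : ZMod (p ^ m)) g)
    have c2 := of_comm_hat (F := F) (DihedralGroup.sr 0) _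
      (fun g => conj_sr_mem ((p ^ (j-1) : ℕ) : ZMod (p ^ m)) g)
    rw [he, hb, sub_mul, mul_sub, c1, c2]
  have hec : e * c = c * e := by
    calc e * c = (c * a) * (e * c) := by rw [hca, one_mul]
    _ = c * ((a * e) * c) := by rw [mul_assoc, mul_assoc]
    _ = c * ((e * a) * c) := by rw [hea]
    _ = c * (e * (a * c)) := by rw [mul_assoc]
    _ = c * e := by rw [hac, mul_one]

  obtain ⟨hsum, q1, q2, q3, q4, q5, q6, q7, q8, q9, q10, q11, q12, q13, q14, q15, q16⟩ :=
    units_aux a b c e u e₁₁ e₁₂ e₂₁ e₂₂ h2 hac hca hbb hba hbc hee hea heb hec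
      hue hwu huw he11 he12 he22 he21
  refine ⟨hsum, ?_⟩
  intro i' j' h' k'
  fin_cases i' <;> fin_cases j' <;> fin_cases h' <;> fin_cases k' <;>
    simp [q1, q2, q3, q4, q5, q6, q7, q8, q9, q10, q11, q12, q13, q14, q15, q16]
end

section
/- Let G = ⟨a, b | a^m = 1 = b^n, bab^{-1} = a^i⟩ be a metacyclic group, F a field with char(F) ∤ |G|, and let C_m × C_n be the direct product of cyclic groups of orders m and n generated by ã and b̃. Let φ: FG → F[C_m × C_n] be the F-linear map induced by a^i b^j ↦ ã^i b̃^j. If e is a central idempotent of FG, then φ(e) is an idempotent of F[C_m × C_n] and φ((FG)e) = F[C_m × C_n]·φ(e). -/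
open MonoidAlgebra Finsupp

private lemma stmt11_single_mul {F G : Type*} [Field F] [Group G] (g : G)
    (f : MonoidAlgebra F G) :
    MonoidAlgebra.single g 1 * f = MonoidAlgebra.mapDomain (fun h => g * h) f := by
  induction f using MonoidAlgebra.induction_linear with
  | zero => rw [mul_zero, MonoidAlgebra.mapDomain_zero]
  | add x y hx hy => rw [mul_add, hx, hy, MonoidAlgebra.mapDomain_add]
  | single h r => rw [MonoidAlgebra.single_mul_single, MonoidAlgebra.mapDomain_single, one_mul]

private lemma stmt11_mul_single {F G : Type*} [Field F] [Group G] (g : G)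
    (f : MonoidAlgebra F G) :
    f * MonoidAlgebra.single g 1 = MonoidAlgebra.mapDomain (fun h => h * g) f := by
  induction f using MonoidAlgebra.induction_linear with
  | zero => rw [zero_mul, MonoidAlgebra.mapDomain_zero]
  | add x y hx hy => rw [add_mul, hx, hy, MonoidAlgebra.mapDomain_add]
  | single h r => rw [MonoidAlgebra.single_mul_single, MonoidAlgebra.mapDomain_single, mul_one]

private lemma stmt11_mapDomain_comp {F M N O : Type*} [Semiring F] {f : M → N} {g : N → O}
    {x : MonoidAlgebra F M} :
    MonoidAlgebra.mapDomain (g ∘ f) x =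
      MonoidAlgebra.mapDomain g (MonoidAlgebra.mapDomain f x) := by
  simp only [MonoidAlgebra.mapDomain, MonoidAlgebra.coeff_ofCoeff]
  rw [Finsupp.mapDomain_comp]

private lemma stmt11_mapDomain_id {F M : Type*} [Semiring F] {x : MonoidAlgebra F M} :
    MonoidAlgebra.mapDomain id x = x := by
  simp only [MonoidAlgebra.mapDomain, Finsupp.mapDomain_id]

theorem stmt11 {F : Type*} [Field F] {G : Type*} [Group G] [Fintype G]
    (hchar : (Fintype.card G : F) ≠ 0)
    (m n i : ℕ) (a b : G)
    (ham : a ^ m = 1) (hbn : b ^ n = 1) (hconj : b * a * b⁻¹ = a ^ i)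
    -- the bijection `aˣbʸ ↦ ãˣb̃ʸ` onto the abelian group `C_m × C_n`
    (σ : G ≃ Multiplicative (ZMod m × ZMod n))
    (hσ : ∀ x y : ℕ, σ (a ^ x * b ^ y) =
      Multiplicative.ofAdd ((x : ZMod m), (y : ZMod n)))
    (e : MonoidAlgebra F G) (hidem : e * e = e)
    (hcentral : ∀ x : MonoidAlgebra F G, x * e = e * x) :
    let φ : MonoidAlgebra F G →ₗ[F]
        MonoidAlgebra F (Multiplicative (ZMod m × ZMod n)) :=
      MonoidAlgebra.mapDomainLinearMap F F σ
    φ e * φ e = φ e ∧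
      Submodule.map φ (Submodule.restrictScalars F (Ideal.span {e})) =
        Submodule.restrictScalars F (Ideal.span {φ e}) := by
  intro φ
  haveI : NeZero m := by
    constructor; rintro rfl
    have : Infinite G := Infinite.of_injective
      (fun k : ℤ => σ.symm (Multiplicative.ofAdd ((k : ZMod 0), (0 : ZMod n))))
      (fun k1 k2 h => by
        have := σ.symm.injective h
        exact congrArg (fun z => (Multiplicative.toAdd z).1) this)
    exact (Finite.of_fintype G).not_infinite this
  haveI : NeZero n := by
    constructor; rintro rfl
    have : Infinite G := Infinite.of_injective
      (fun k : ℤ => σ.symm (Multiplicative.ofAdd ((0 : ZMod m), (k : ZMod 0))))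
      (fun k1 k2 h => by
        have := σ.symm.injective h
        exact congrArg (fun z => (Multiplicative.toAdd z).2) this)
    exact (Finite.of_fintype G).not_infinite this
  -- every element of G is of the form a^x b^y
  have hsurj : ∀ g : G, ∃ x y : ℕ, g = a ^ x * b ^ y := by
    intro g
    refine ⟨(Multiplicative.toAdd (σ g)).1.val, (Multiplicative.toAdd (σ g)).2.val,
      σ.injective ?_⟩
    rw [hσ]
    simp [ZMod.natCast_val, ZMod.cast_id]
  -- conjugation by powers of b
  have hb : ∀ u : ℕ, b * a ^ u * b⁻¹ = a ^ (u * i) := by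
    intro u
    rw [← conj_pow, hconj, ← pow_mul, mul_comm]
  have hc : ∀ y u : ℕ, b ^ y * a ^ u * (b ^ y)⁻¹ = a ^ (u * i ^ y) := by
    intro y
    induction y with
    | zero => simp
    | succ y ih =>
      intro u
      calc b ^ (y + 1) * a ^ u * (b ^ (y + 1))⁻¹
          = b * (b ^ y * a ^ u * (b ^ y)⁻¹) * b⁻¹ := by rw [pow_succ']; group
        _ = b * a ^ (u * i ^ y) * b⁻¹ := by rw [ih]
        _ = a ^ (u * i ^ (y + 1)) := by rw [hb, pow_succ, mul_assoc]
  -- the key twisted multiplicativity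
  have hkey : ∀ (x y : ℕ) (h : G),
      σ (a ^ x * b ^ y * h) = σ (a ^ x * b ^ y) * σ (b ^ y * h * (b ^ y)⁻¹) := by
    intro x y h
    obtain ⟨u, v, rfl⟩ := hsurj h
    have e1 : a ^ x * b ^ y * (a ^ u * b ^ v) = a ^ (x + u * i ^ y) * b ^ (y + v) := by
      calc a ^ x * b ^ y * (a ^ u * b ^ v)
          = a ^ x * (b ^ y * a ^ u * (b ^ y)⁻¹) * (b ^ y * b ^ v) := by group
        _ = a ^ x * a ^ (u * i ^ y) * (b ^ y * b ^ v) := by rw [hc]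
        _ = a ^ (x + u * i ^ y) * b ^ (y + v) := by rw [← pow_add, ← pow_add]
    have e2 : b ^ y * (a ^ u * b ^ v) * (b ^ y)⁻¹ = a ^ (u * i ^ y) * b ^ v := by
      calc b ^ y * (a ^ u * b ^ v) * (b ^ y)⁻¹
          = (b ^ y * a ^ u * (b ^ y)⁻¹) * (b ^ y * b ^ v * (b ^ y)⁻¹) := by group
        _ = a ^ (u * i ^ y) * b ^ v := by rw [hc]; congr 1; group
    rw [e1, e2, hσ, hσ, hσ, ← ofAdd_add]
    congr 1
    rw [Prod.mk_add_mk]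
    push_cast
    ring_nf
  -- central elements are invariant under conjugation of the domain
  have hconjinv : ∀ c : G, MonoidAlgebra.mapDomain (fun h => c * h * c⁻¹) e = e := by
    intro c
    have h1 : MonoidAlgebra.single c 1 * e * MonoidAlgebra.single c⁻¹ 1 = e := by
      rw [hcentral, mul_assoc, MonoidAlgebra.single_mul_single, mul_inv_cancel, mul_one,
        ← MonoidAlgebra.one_def, mul_one]
    calc MonoidAlgebra.mapDomain (fun h => c * h * c⁻¹) e
        = MonoidAlgebra.mapDomain ((fun h => h * c⁻¹) ∘ fun h => c * h) e := rfl
      _ = MonoidAlgebra.mapDomain (fun h => h * c⁻¹) (MonoidAlgebra.mapDomain (fun h => c * h) e) :=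
          stmt11_mapDomain_comp
      _ = e := by rw [← stmt11_single_mul, ← stmt11_mul_single, h1]
  -- φ intertwines multiplication by a single with multiplication by its image
  have hφ : ∀ f : MonoidAlgebra F G, φ f = MonoidAlgebra.mapDomain σ f := fun f => rfl
  have hmul1 : ∀ g : G,
      φ (MonoidAlgebra.single g 1 * e) = MonoidAlgebra.single (σ g) 1 * φ e := by
    intro g
    obtain ⟨x, y, rfl⟩ := hsurj g
    set g := a ^ x * b ^ y with hg
    calc φ (MonoidAlgebra.single g 1 * e)
        = MonoidAlgebra.mapDomain σ (MonoidAlgebra.mapDomain (fun h => g * h) e) := by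
          rw [hφ, stmt11_single_mul]
      _ = MonoidAlgebra.mapDomain (⇑σ ∘ fun h => g * h) e := stmt11_mapDomain_comp.symm
      _ = MonoidAlgebra.mapDomain
            (((fun z => σ g * z) ∘ ⇑σ) ∘ fun h => b ^ y * h * (b ^ y)⁻¹) e := by
          congr 1
          funext h
          exact hkey x y h
      _ = MonoidAlgebra.mapDomain ((fun z => σ g * z) ∘ ⇑σ)
            (MonoidAlgebra.mapDomain (fun h => b ^ y * h * (b ^ y)⁻¹) e) := stmt11_mapDomain_comp
      _ = MonoidAlgebra.mapDomain (fun z => σ g * z) (MonoidAlgebra.mapDomain σ e) := by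
          rw [hconjinv, stmt11_mapDomain_comp]
      _ = MonoidAlgebra.single (σ g) 1 * φ e := by rw [← stmt11_single_mul, hφ]
  have hmul : ∀ f : MonoidAlgebra F G, φ (f * e) = φ f * φ e := by
    intro f
    induction f using MonoidAlgebra.induction_linear with
    | zero => simp
    | add f g hf hg => rw [add_mul, map_add, map_add, add_mul, hf, hg]
    | single g r =>
      have h1 : (MonoidAlgebra.single g r : MonoidAlgebra F G)
          = r • MonoidAlgebra.single g 1 := by
        rw [MonoidAlgebra.smul_single, smul_eq_mul, mul_one]
      have h2 : φ (MonoidAlgebra.single g 1) = MonoidAlgebra.single (σ g) 1 := by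
        rw [hφ, MonoidAlgebra.mapDomain_single]
      rw [h1, smul_mul_assoc, map_smul, map_smul, hmul1, h2, smul_mul_assoc]
  have hsur : Function.Surjective φ := by
    intro w
    refine ⟨MonoidAlgebra.mapDomain σ.symm w, ?_⟩
    rw [hφ, ← stmt11_mapDomain_comp]
    have : ⇑σ ∘ ⇑σ.symm = id := funext σ.apply_symm_apply
    rw [this, stmt11_mapDomain_id]
  constructor
  · rw [← hmul, hidem]
  · ext z
    simp only [Submodule.mem_map, Submodule.restrictScalars_mem]
    constructor
    · rintro ⟨x, hx, rfl⟩
      obtain ⟨c, rfl⟩ := Submodule.mem_span_singleton.mp hx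
      exact Submodule.mem_span_singleton.mpr ⟨φ c, by rw [smul_eq_mul, smul_eq_mul, hmul]⟩
    · intro hz
      obtain ⟨w, rfl⟩ := Submodule.mem_span_singleton.mp hz
      obtain ⟨y, rfl⟩ := hsur w
      refine ⟨y * e, Submodule.mem_span_singleton.mpr ⟨y, by rw [smul_eq_mul]⟩, ?_⟩
      rw [smul_eq_mul, hmul]
end

section
/- Let p be an odd prime, j ≥ 1, F_q a finite field with q generating the units of Z/p^m, and e = Ĥ_j − Ĥ_{j−1} the primitive idempotent of F_q⟨a⟩ (with a of order p^m, H_j = ⟨a^{p^j}⟩). Then (2 − a + a^{-1})·e ≠ 0 in F_q⟨a⟩. -/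
open scoped Classical

open Subgroup in
private lemma gen_image {G H : Type*} [Group G] [Group H] [Finite G] [Finite H]
    (π : G →* H) (hπ : Function.Surjective π) (u : G) (hu : orderOf u = Nat.card G) :
    orderOf (π u) = Nat.card H := by
  have h1 : zpowers u = ⊤ := by
    apply Subgroup.eq_top_of_card_eq
    rw [Nat.card_zpowers, hu]
  have h2 : zpowers (π u) = ⊤ := by
    rw [← MonoidHom.map_zpowers, h1, ← MonoidHom.range_eq_map]
    exact MonoidHom.range_eq_top.mpr hπ
  apply orderOf_eq_card_of_forall_mem_zpowers
  intro x; rw [h2]; trivial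

private lemma ord_red (q p m j : ℕ) (hjm : j ≤ m) [NeZero (p ^ m)] [NeZero (p ^ j)]
    (hcop : Nat.Coprime q (p ^ m)) (hcopj : Nat.Coprime q (p ^ j))
    (hgen : orderOf (ZMod.unitOfCoprime q hcop) = (p ^ m).totient) :
    orderOf (ZMod.unitOfCoprime q hcopj) = (p ^ j).totient := by
  have hdvd : p ^ j ∣ p ^ m := pow_dvd_pow p hjm
  have hsurj := ZMod.unitsMap_surjective (n := p ^ j) (m := p ^ m) hdvd
  have key := gen_image (ZMod.unitsMap hdvd) hsurj (ZMod.unitOfCoprime q hcop) ?_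
  · have heq : ZMod.unitsMap hdvd (ZMod.unitOfCoprime q hcop) = ZMod.unitOfCoprime q hcopj := by
      ext
      simp [ZMod.unitsMap_def, ZMod.coe_unitOfCoprime, map_natCast]
    rw [heq] at key
    rw [key, Nat.card_eq_fintype_card, ZMod.card_units_eq_totient]
  · rw [hgen, Nat.card_eq_fintype_card, ZMod.card_units_eq_totient]

open MonoidAlgebra in
private lemma hat_eval {F : Type*} [Field F] {A : Type*} [Group A] [Fintype A]
    {K : Type*} [Field K] [Algebra F K] (χ : A →* K) (S : Subgroup A) :
    (MonoidAlgebra.lift F K A χ) (hat F S) = (Nat.card S : F)⁻¹ • ∑ g : S, χ (g : A) := by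
  rw [hat, map_smul, map_sum]
  congr 1
  have h : ∀ g : A, (lift F K A χ) (if g ∈ S then of F A g else 0)
      = if g ∈ S then χ g else 0 := by
    intro g
    rw [apply_ite (lift F K A χ), map_zero, lift_of]
  rw [Finset.sum_congr rfl fun g _ => h g, ← Finset.sum_filter]
  exact Finset.sum_subtype _ (by simp) _

private lemma hat_eval_triv {F : Type*} [Field F] {A : Type*} [Group A] [Fintype A]
    {K : Type*} [Field K] [Algebra F K] (χ : A →* K) (S : Subgroup A)
    (h1 : ∀ g ∈ S, χ g = 1) (h2 : (Nat.card S : K) ≠ 0) :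
    (MonoidAlgebra.lift F K A χ) (hat F S) = 1 := by
  rw [hat_eval]
  have h : ∑ g : S, χ (g : A) = (Nat.card S : K) := by
    rw [Finset.sum_congr rfl fun (g : S) _ => h1 g g.2]
    simp [Nat.card_eq_fintype_card]
  rw [h, Algebra.smul_def, map_inv₀, map_natCast]
  exact inv_mul_cancel₀ h2

private lemma hat_eval_nontriv {F : Type*} [Field F] {A : Type*} [Group A] [Fintype A]
    {K : Type*} [Field K] [IsDomain K] [Algebra F K] (χ : A →* K) (S : Subgroup A)
    (h1 : ∃ g ∈ S, χ g ≠ 1) :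
    (MonoidAlgebra.lift F K A χ) (hat F S) = 0 := by
  rw [hat_eval]
  have h : ∑ g : S, χ (g : A) = 0 := by
    apply sum_hom_units_eq_zero (χ.comp S.subtype)
    obtain ⟨g, hg, hne⟩ := h1
    intro h
    exact hne (by simpa using DFunLike.congr_fun h (⟨g, hg⟩ : S))
  rw [h, smul_zero]

private lemma exists_zmod_char {G : Type*} [CommGroup G] (n : ℕ) (z : G) (hz : z ^ n = 1) :
    ∃ χ : Multiplicative (ZMod n) →* G, χ (Multiplicative.ofAdd 1) = z := by
  have h : (zmultiplesHom (Additive G) (Additive.ofMul z)) (n : ℤ) = 0 := by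
    simp only [zmultiplesHom_apply]
    rw [← ofMul_zpow]
    simp [hz]
  refine ⟨AddMonoidHom.toMultiplicativeLeft (ZMod.lift n ⟨_, h⟩), ?_⟩
  have h1 : ((1 : ℤ) : ZMod n) = (1 : ZMod n) := by push_cast; rfl
  show Additive.toMul ((ZMod.lift n ⟨_, h⟩) (1 : ZMod n)) = z
  rw [← h1, ZMod.lift_coe]
  simp

private lemma key_ne {F : Type*} [Field F] [Fintype F] {K : Type*} [Field K] [Algebra F K]
    (p m j : ℕ) (hp : p.Prime) (hodd : Odd p) (hj : 1 ≤ j) (hjm : j ≤ m) [NeZero (p ^ m)]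
    (hcop : Nat.Coprime (Fintype.card F) (p ^ m))
    (hgen : orderOf (ZMod.unitOfCoprime (Fintype.card F) hcop) = (p ^ m).totient)
    (ζ : K) (hζ : IsPrimitiveRoot ζ (p ^ j)) :
    2 - ζ + ζ⁻¹ ≠ 0 := by
  have hpj : (p : ℕ) ^ j ≠ 0 := pow_ne_zero _ hp.pos.ne'
  haveI : NeZero (p ^ j) := ⟨hpj⟩
  set q := Fintype.card F with hqdef
  have hq1 : 1 ≤ q := Fintype.card_pos
  set ℓ := ringChar F with hℓdef
  haveI : CharP F ℓ := ringChar.charP F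
  obtain ⟨s, hℓprime, hcard⟩ := FiniteField.card F ℓ
  have hqℓ : q = ℓ ^ (s : ℕ) := hcard
  haveI : Fact ℓ.Prime := ⟨hℓprime⟩
  haveI : CharP K ℓ := charP_of_injective_algebraMap (algebraMap F K).injective ℓ
  have hℓp : ℓ ≠ p := by
    intro h
    have hdvd : ℓ ∣ q := by rw [hqℓ]; exact dvd_pow_self ℓ s.pos.ne'
    have h1 : Nat.Coprime ℓ (p ^ m) := Nat.Coprime.coprime_dvd_left hdvd hcop
    have h2 : Nat.Coprime ℓ p := Nat.Coprime.coprime_dvd_right (dvd_pow_self p (by omega)) h1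
    rw [h] at h2
    simp [Nat.Coprime] at h2
    have := hp.two_le
    omega
  have hζ0 : ζ ≠ 0 := hζ.ne_zero hpj
  intro h0
  have hquad : ζ ^ 2 = 2 * ζ + 1 := by
    field_simp at h0
    linear_combination -h0
  have h2q : (2 : K) ^ q = 2 := by
    have h := add_pow_char_pow (R := K) (x := 1) (y := 1) (p := ℓ) (n := (s : ℕ))
    rw [← hqℓ] at h
    simpa [one_add_one_eq_two] using h
  have hroot : (ζ ^ q) ^ 2 = 2 * (ζ ^ q) + 1 := by
    have h := add_pow_char_pow (R := K) (x := 2 * ζ) (y := 1) (p := ℓ) (n := (s : ℕ))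
    rw [← hqℓ] at h
    calc (ζ ^ q) ^ 2 = (ζ ^ 2) ^ q := by ring
    _ = (2 * ζ + 1) ^ q := by rw [hquad]
    _ = 2 * ζ ^ q + 1 := by rw [h, mul_pow, h2q, one_pow]
  have hsub : ∀ x : K, (2 - x) ^ q = 2 - x ^ q := by
    intro x
    have h := sub_pow_char_pow (R := K) (x := (2:K)) (y := x) (p := ℓ) (n := (s : ℕ))
    rw [← hqℓ] at h
    rw [h, h2q]
  have hcases : ζ ^ q = ζ ∨ ζ ^ q = 2 - ζ := by
    have h : (ζ ^ q - ζ) * (ζ ^ q - (2 - ζ)) = 0 := by linear_combination hroot - hquad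
    rcases mul_eq_zero.mp h with h | h
    · exact Or.inl (sub_eq_zero.mp h)
    · exact Or.inr (sub_eq_zero.mp h)
  have hq2 : ζ ^ q ^ 2 = ζ := by
    have hpow : ζ ^ q ^ 2 = (ζ ^ q) ^ q := by rw [← pow_mul, sq]
    rcases hcases with h | h
    · rw [hpow, h, h]
    · rw [hpow, h, hsub, h]; ring
  have hdvd2 : p ^ j ∣ q ^ 2 - 1 := by
    rw [← hζ.pow_eq_one_iff_dvd]
    have hq21 : 1 ≤ q ^ 2 := Nat.one_le_pow _ _ (by omega)
    have h : ζ ^ (q ^ 2 - 1) * ζ = ζ := by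
      rw [← pow_succ, Nat.sub_add_cancel hq21, hq2]
    field_simp at h
    exact h
  have hcopj : Nat.Coprime q (p ^ j) := Nat.Coprime.coprime_dvd_right (pow_dvd_pow p hjm) hcop
  have hordj := ord_red q p m j hjm hcop hcopj hgen
  set u := ZMod.unitOfCoprime q hcopj with hudef
  have hu2 : u ^ 2 = 1 := by
    ext
    push_cast [hudef, ZMod.coe_unitOfCoprime]
    have h : ((q ^ 2 - 1 : ℕ) : ZMod (p ^ j)) = 0 :=
      (ZMod.natCast_eq_zero_iff _ _).mpr hdvd2
    have hq21 : 1 ≤ q ^ 2 := Nat.one_le_pow _ _ (by omega)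
    push_cast [Nat.cast_sub hq21] at h
    linear_combination h
  have hdvd2' : (p ^ j).totient ∣ 2 := hordj ▸ orderOf_dvd_of_pow_eq_one hu2
  have htot : (p ^ j).totient = p ^ (j - 1) * (p - 1) := Nat.totient_prime_pow hp (by omega)
  have hple : p ^ (j - 1) * (p - 1) ≤ 2 := Nat.le_of_dvd (by norm_num) (htot ▸ hdvd2')
  have hp3 : 3 ≤ p := by
    obtain ⟨k, hk⟩ := hodd
    have := hp.two_le
    omega
  have hpeq : p = 3 := by
    have h1 : p ^ (j - 1) * (p - 1) ≥ 1 * (p - 1) :=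
      Nat.mul_le_mul_right _ (Nat.one_le_pow _ _ (by omega))
    omega
  have hjeq : j = 1 := by
    by_contra hne
    have hj2 : 2 ≤ j := by omega
    have h1 : p ≤ p ^ (j - 1) := Nat.le_self_pow (by omega) p
    have h2 : p ^ (j - 1) * (p - 1) ≥ p * 2 := by
      apply Nat.mul_le_mul h1; omega
    omega
  subst hpeq hjeq
  have hcube : ζ ^ 3 = 1 := by
    have := hζ.pow_eq_one
    norm_num at this
    exact this
  have hne1 : ζ ≠ 1 := hζ.ne_one (by norm_num)
  have hsum : ζ ^ 2 + ζ + 1 = 0 := by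
    have hfac : (ζ - 1) * (ζ ^ 2 + ζ + 1) = 0 := by linear_combination hcube
    rcases mul_eq_zero.mp hfac with h | h
    · exact absurd (sub_eq_zero.mp h) hne1
    · exact h
  have h3ζ : (3 : K) * ζ + 2 = 0 := by linear_combination hsum - hquad
  have h3ne : (3 : K) ≠ 0 := by
    have : ((3 : ℕ) : K) ≠ 0 := by
      rw [Ne, CharP.cast_eq_zero_iff K ℓ 3]
      intro hdv
      exact hℓp ((Nat.prime_dvd_prime_iff_eq hℓprime (by norm_num)).mp hdv)
    simpa using this
  have h3neF : (3 : F) ≠ 0 := by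
    intro h
    apply h3ne
    rw [← map_ofNat (algebraMap F K) 3, h, map_zero]
  set c : F := -2 / 3 with hcdef
  have hc : algebraMap F K c = ζ := by
    rw [hcdef, map_div₀, map_neg, map_ofNat, map_ofNat]
    field_simp
    linear_combination -h3ζ
  have hcne : c ≠ 0 := by
    intro h
    apply hζ0
    rw [← hc, h, map_zero]
  have hpow : ζ ^ (q - 1) = 1 := by
    rw [← hc, ← map_pow, FiniteField.pow_card_sub_one_eq_one c hcne, map_one]
  have hdvdq : 3 ^ 1 ∣ q - 1 := (hζ.pow_eq_one_iff_dvd _).mp hpow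
  obtain ⟨k, hk⟩ := hdvdq
  have hqe : q = 3 * k + 1 := by omega
  have hu1 : u = 1 := by
    ext
    rw [hudef, ZMod.coe_unitOfCoprime, hqe]
    push_cast
    have h3z : ((3 : ℕ) : ZMod (3 ^ 1)) = 0 :=
      (ZMod.natCast_eq_zero_iff 3 (3 ^ 1)).mpr (by norm_num)
    push_cast at h3z
    rw [h3z]
    ring
  rw [hu1, orderOf_one] at hordj
  have : (3 ^ 1 : ℕ).totient = 2 := by decide
  omega

theorem stmt14 {F : Type*} [Field F] [Fintype F] (p m j : ℕ) (hp : p.Prime)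
    (hodd : Odd p) (hj : 1 ≤ j) (hjm : j ≤ m)
    (hcop : Nat.Coprime (Fintype.card F) (p ^ m)) [NeZero (p ^ m)]
    -- `q` generates the unit group of `ℤ/pᵐ`
    (hgen : orderOf (ZMod.unitOfCoprime (Fintype.card F) hcop) =
      (p ^ m).totient) :
    let A := Multiplicative (ZMod (p ^ m))
    let a : A := Multiplicative.ofAdd 1
    let e : MonoidAlgebra F A :=
      hat F (Subgroup.zpowers (a ^ p ^ j)) -
        hat F (Subgroup.zpowers (a ^ p ^ (j - 1)))
    (2 - MonoidAlgebra.of F A a + MonoidAlgebra.of F A a⁻¹) * e ≠ 0 := by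
  intro A a e
  have hp2 := hp.two_le
  have hm1 : 1 ≤ m := le_trans hj hjm
  have hpj : (p : ℕ) ^ j ≠ 0 := pow_ne_zero _ hp.pos.ne'
  have hpm : (p : ℕ) ^ m ≠ 0 := pow_ne_zero _ hp.pos.ne'
  set q := Fintype.card F with hqdef
  set ℓ := ringChar F with hℓdef
  haveI : CharP F ℓ := ringChar.charP F
  obtain ⟨s, hℓprime, hcard⟩ := FiniteField.card F ℓ
  have hqℓ : q = ℓ ^ (s : ℕ) := hcard
  haveI : Fact ℓ.Prime := ⟨hℓprime⟩
  set K := AlgebraicClosure F with hKdef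
  haveI : CharP K ℓ := charP_of_injective_algebraMap (algebraMap F K).injective ℓ
  have hℓdvd : ℓ ∣ q := by rw [hqℓ]; exact dvd_pow_self ℓ s.pos.ne'
  have hℓpm : ¬ ℓ ∣ p ^ m := by
    intro h
    have h1 : Nat.Coprime ℓ (p ^ m) := Nat.Coprime.coprime_dvd_left hℓdvd hcop
    have h2 : ℓ = 1 := Nat.Coprime.eq_one_of_dvd h1 h
    exact hℓprime.one_lt.ne' h2
  have hℓpj : ¬ ℓ ∣ p ^ j := fun h => hℓpm (h.trans (pow_dvd_pow p hjm))
  have hcast : ∀ c : ℕ, c ∣ p ^ m → ((c : K) ≠ 0) := by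
    intro c hc hzero
    exact hℓpm (((CharP.cast_eq_zero_iff K ℓ c).mp hzero).trans hc)
  haveI : NeZero ((p ^ j : ℕ) : K) := ⟨hcast _ (pow_dvd_pow p hjm)⟩
  obtain ⟨ζ, hζ⟩ := HasEnoughRootsOfUnity.exists_primitiveRoot K (p ^ j)
  have hζ0 : ζ ≠ 0 := hζ.ne_zero hpj
  set ζu : Kˣ := (hζ.isUnit hpj).unit with hζudef
  have hζu : (ζu : K) = ζ := IsUnit.unit_spec _
  have hζupj : ζu ^ p ^ j = 1 := by
    ext
    push_cast [hζu]
    exact hζ.pow_eq_one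
  have hζupm : ζu ^ p ^ m = 1 := by
    obtain ⟨t, ht⟩ := pow_dvd_pow p hjm
    rw [ht, pow_mul, hζupj, one_pow]
  obtain ⟨χ₀, hχ₀⟩ := exists_zmod_char (p ^ m) ζu hζupm
  set χ : A →* K := (Units.coeHom K).comp χ₀ with hχdef
  set φ := MonoidAlgebra.lift F K A χ with hφdef
  have hχa : χ a = ζ := by
    show ((χ₀ a : Kˣ) : K) = ζ
    rw [hχ₀, hζu]
  -- evaluation on the two hats
  have hS1 : ∀ g ∈ Subgroup.zpowers (a ^ p ^ j), χ g = 1 := by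
    intro g hg
    obtain ⟨t, rfl⟩ := Subgroup.mem_zpowers_iff.mp hg
    show ((χ₀ ((a ^ p ^ j) ^ t) : Kˣ) : K) = 1
    rw [map_zpow, map_pow, hχ₀, hζupj, one_zpow, Units.val_one]
  have horddvd : orderOf (a ^ p ^ j) ∣ p ^ m := by
    apply orderOf_dvd_of_pow_eq_one
    rw [← pow_mul, mul_comm, pow_mul]
    have ha : a ^ p ^ m = 1 := by
      show Multiplicative.ofAdd (1 : ZMod (p ^ m)) ^ p ^ m = 1
      rw [← ofAdd_nsmul]
      simp [ZMod.natCast_self]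
    rw [ha, one_pow]
  have hcard1 : ((Nat.card (Subgroup.zpowers (a ^ p ^ j)) : K) ≠ 0) := by
    rw [Nat.card_zpowers]
    exact hcast _ horddvd
  have heval1 : φ (hat F (Subgroup.zpowers (a ^ p ^ j))) = 1 :=
    hat_eval_triv χ _ hS1 hcard1
  have heval2 : φ (hat F (Subgroup.zpowers (a ^ p ^ (j - 1)))) = 0 := by
    apply hat_eval_nontriv χ _
    refine ⟨a ^ p ^ (j - 1), Subgroup.mem_zpowers _, ?_⟩
    rw [map_pow, hχa]
    rw [Ne, hζ.pow_eq_one_iff_dvd]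
    intro hd
    have h1 : p ^ j ≤ p ^ (j - 1) := Nat.le_of_dvd (Nat.pos_of_ne_zero (pow_ne_zero _ hp.pos.ne')) hd
    have h2 : p ^ (j - 1) < p ^ j := Nat.pow_lt_pow_right hp.one_lt (by omega)
    omega
  have hevale : φ e = 1 := by
    show φ (_ - _) = 1
    rw [map_sub, heval1, heval2, sub_zero]
  have hpref : φ (2 - MonoidAlgebra.of F A a + MonoidAlgebra.of F A a⁻¹) = 2 - ζ + ζ⁻¹ := by
    rw [map_add, map_sub, MonoidAlgebra.lift_of, MonoidAlgebra.lift_of]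
    have hinv : χ a⁻¹ = ζ⁻¹ := by
      show ((χ₀ a⁻¹ : Kˣ) : K) = ζ⁻¹
      rw [map_inv, hχ₀, ← hζu, ← Units.val_inv_eq_inv_val]
    rw [hinv, hχa, map_ofNat]
  intro hzero
  have h := congrArg φ hzero
  rw [map_zero, map_mul, hpref, hevale, mul_one] at h
  exact key_ne p m j hp hodd hj hjm hcop hgen ζ hζ h
end
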